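/- arXiv:2503.10840 — 8 statements merged into one kernel-verified Lean document; each statement's English description precedes it below -/
import Mathlib

section
/- Let h_p, w_p ∈ ℕ_{>0} be pooling window sizes, p_h, p_w ∈ ℕ padding sizes, s_h, s_w ∈ ℕ_{>0} strides, and x ∈ ℝ^{c_x×h_x×w_x} an input tensor. Let h_y, w_y ∈ ℕ_{>0} be the output height and width. Define the average-pooling output y ∈ ℝ^{c_x×h_y×w_y} by y[i_{c_x},i_{h_y},i_{w_y}] = (Σ_{i_{h_p}=1}^{h_p} Σ_{i_{w_p}=1}^{w_p} x̄[i_{c_x},j_h,j_w]) / (h_p·w_p), where j_h = i_{h_p}+(i_{h_y}−1)s_h−p_h, j_w = i_{w_p}+(i_{w_y}−1)s_w−p_w, and x̄[i_{c_x},j_h,j_w] = x[i_{c_x},j_h,j_w] if 1 ≤ j_h ≤ h_x and 1 ≤ j_w ≤ w_x, and 0 otherwise. Let x̃ and ỹ be the row-major flattenings of x and y. Then ỹ = W^{ap}·W̃^{p}·x̃, where W̃^{p} ∈ ℝ^{(c_x·(h_x+2p_h)·(w_x+2p_w))×(c_x·h_x·w_x)} is the zero matrix except for entries equal to 1 at row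 𝔦_row = (i_{c_x}−1)(h_x+2p_h)(w_x+2p_w) + p_h(w_x+2p_w) + (i_{h_x}−1)(w_x+2p_w) + p_w + i_{w_x} and column 𝔦_col = (i_{c_x}−1)h_x·w_x + (i_{h_x}−1)w_x + i_{w_x} for all i_{c_x} ∈ [c_x], i_{h_x} ∈ [h_x], i_{w_x} ∈ [w_x], and W^{ap} ∈ ℝ^{(c_x·h_y·w_y)×(c_x·(h_x+2p_h)·(w_x+2p_w))} is the zero matrix except for entries equal to 1/(h_p·w_p) at row 𝔧_row = (i_{c_x}−1)h_y·w_y + (i_{h_y}−1)w_y + i_{w_y} and column 𝔧_col = (i_{c_x}−1)(h_x+2p_h)(w_x+2p_w) + (i_{w_y}−1)s_w + i_{w_p} + (i_{h_p}−1)(w_x+2p_w) + (i_{h_y}−1)(w_x+2p_w)s_h, for all i_{c_x} ∈ [c_x], i_{h_y} ∈ [h_y], i_{w_y} ∈ [w_y], i_{h_p} ∈ [h_p], i_{w_p} ∈ [w_p]. -/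
open Finset

lemma my_flatten_mem {c m n i j k : ℕ} (hi : i ∈ Icc 1 c) (hj : j ∈ Icc 1 m) (hk : k ∈ Icc 1 n) :
    (i-1)*(m*n) + (j-1)*n + k ∈ Icc 1 (c*(m*n)) := by
  simp only [mem_Icc] at *
  refine ⟨by omega, ?_⟩
  have h1 : (i-1)*(m*n) ≤ (c-1)*(m*n) := Nat.mul_le_mul_right _ (by omega)
  have h2 : (j-1)*n ≤ (m-1)*n := Nat.mul_le_mul_right _ (by omega)
  have h3 : (c-1)*(m*n) + (m*n) = c*(m*n) := by
    have hc : c - 1 + 1 = c := by omega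
    calc (c-1)*(m*n) + m*n = (c-1+1)*(m*n) := by ring
    _ = c*(m*n) := by rw [hc]
  have h4 : (m-1)*n + n = m*n := by
    have hm : m - 1 + 1 = m := by omega
    calc (m-1)*n + n = (m-1+1)*n := by ring
    _ = m*n := by rw [hm]
  omega

lemma my_flatten_surj {c m n p : ℕ} (hpm : p ∈ Icc 1 (c*(m*n))) :
    ∃ i ∈ Icc 1 c, ∃ j ∈ Icc 1 m, ∃ k ∈ Icc 1 n,
      p = (i-1)*(m*n) + (j-1)*n + k := by
  simp only [mem_Icc] at hpm
  have hc : 0 < c := by rcases Nat.eq_zero_or_pos c with h|h; · subst h; simp at hpm; omega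
                        · exact h
  have hm : 0 < m := by rcases Nat.eq_zero_or_pos m with h|h; · subst h; simp at hpm; omega
                        · exact h
  have hn : 0 < n := by rcases Nat.eq_zero_or_pos n with h|h; · subst h; simp at hpm; omega
                        · exact h
  have hmn : 0 < m * n := Nat.mul_pos hm hn
  set q := p - 1 with hq
  have b3 : q / (m*n) < c := Nat.div_lt_of_lt_mul (by rw [Nat.mul_comm]; omega)
  have b1 : q % (m*n) < m*n := Nat.mod_lt _ hmn
  have b4 : q % (m*n) / n < m := Nat.div_lt_of_lt_mul (lt_of_lt_of_le b1 (le_of_eq (Nat.mul_comm m n)))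
  have b2 : q % (m*n) % n < n := Nat.mod_lt _ hn
  refine ⟨q/(m*n)+1, by simp only [mem_Icc]; exact ⟨Nat.succ_le_succ (Nat.zero_le _), b3⟩,
    q%(m*n)/n+1, by simp only [mem_Icc]; exact ⟨Nat.succ_le_succ (Nat.zero_le _), b4⟩,
    q%(m*n)%n+1, by simp only [mem_Icc]; exact ⟨Nat.succ_le_succ (Nat.zero_le _), b2⟩, ?_⟩
  have e2 : m*n * (q / (m*n)) + q % (m*n) = q := Nat.div_add_mod q (m*n)
  have e1 : n * (q % (m*n) / n) + q % (m*n) % n = q % (m*n) := Nat.div_add_mod _ n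
  simp only [Nat.add_sub_cancel]
  calc p = q + 1 := by omega
    _ = m*n * (q / (m*n)) + (n * (q % (m*n) / n) + q % (m*n) % n) + 1 := by rw [e1, e2]
    _ = (q/(m*n))*(m*n) + (q%(m*n)/n)*n + (q%(m*n)%n + 1) := by ring

lemma my_pair_inj {n a b a' b' : ℕ} (hb : b < n) (hb' : b' < n) (h : a*n + b = a'*n + b') :
    a = a' ∧ b = b' := by
  have hbb : b = b' := by
    have h1 : (a*n + b) % n = b := by rw [Nat.mul_add_mod', Nat.mod_eq_of_lt hb]
    have h2 : (a'*n + b') % n = b' := by rw [Nat.mul_add_mod', Nat.mod_eq_of_lt hb']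
    rw [← h1, ← h2, h]
  refine ⟨?_, hbb⟩
  have : a * n = a' * n := by omega
  exact Nat.eq_of_mul_eq_mul_right (by omega) this

lemma my_pair_inj1 {n a b a' b' : ℕ} (hb1 : 1 ≤ b) (hb : b ≤ n) (hb1' : 1 ≤ b') (hb' : b' ≤ n)
    (h : a*n + b = a'*n + b') : a = a' ∧ b = b' := by
  have h' : a*n + (b-1) + 1 = a'*n + (b'-1) + 1 := by
    rw [add_assoc, add_assoc, Nat.sub_add_cancel hb1, Nat.sub_add_cancel hb1']; exact h
  obtain ⟨e1, e2⟩ := my_pair_inj (show b-1 < n by omega) (show b'-1 < n by omega)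
    (Nat.add_right_cancel h')
  exact ⟨e1, by omega⟩

lemma my_triple_inj {c m n i j k i' j' k' : ℕ}
    (hi : i ∈ Icc 1 c) (hj : j ∈ Icc 1 m) (hk : k ∈ Icc 1 n)
    (hi' : i' ∈ Icc 1 c) (hj' : j' ∈ Icc 1 m) (hk' : k' ∈ Icc 1 n)
    (h : (i-1)*(m*n) + (j-1)*n + k = (i'-1)*(m*n) + (j'-1)*n + k') :
    i = i' ∧ j = j' ∧ k = k' := by
  simp only [mem_Icc] at *
  have h1 : ((i-1)*m + (j-1))*n + k = ((i'-1)*m + (j'-1))*n + k' := by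
    calc ((i-1)*m + (j-1))*n + k = (i-1)*(m*n) + (j-1)*n + k := by ring
    _ = (i'-1)*(m*n) + (j'-1)*n + k' := h
    _ = ((i'-1)*m + (j'-1))*n + k' := by ring
  obtain ⟨e1, e2⟩ := my_pair_inj1 hk.1 hk.2 hk'.1 hk'.2 h1
  obtain ⟨e3, e4⟩ := my_pair_inj (show j-1 < m by omega) (show j'-1 < m by omega) e1
  exact ⟨by omega, by omega, e2⟩

lemma my_window_bound {X p s k n i j : ℕ} (hs : 0 < s) (hn : 0 < n)
    (h1 : n * s ≤ X + p + s - k) (hik : i ≤ k) (hj1 : 1 ≤ j) (hjn : j ≤ n) :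
    i + (j-1)*s ≤ X + 2*p := by
  have h2 : (j-1)*s ≤ (n-1)*s := Nat.mul_le_mul_right _ (by omega)
  have h3 : (n-1)*s + s = n*s := by
    have hn1 : n - 1 + 1 = n := by omega
    calc (n-1)*s + s = (n-1+1)*s := by ring
    _ = n*s := by rw [hn1]
  revert h1 h2 h3
  generalize (j-1)*s = a
  generalize (n-1)*s = b
  generalize n*s = d
  intro h1 h2 h3
  omega

/-- `(r, c)` is one of the positions of the `1` entries of the padding matrix `W̃ᵖ`:
`r = 𝔦_row = (i_cx−1)(h_x+2p_h)(w_x+2p_w) + p_h(w_x+2p_w) + (i_hx−1)(w_x+2p_w) + p_w + i_wx`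
and `c = 𝔦_col = (i_cx−1)h_x·w_x + (i_hx−1)w_x + i_wx` for some `i_cx ∈ [c_x]`,
`i_hx ∈ [h_x]`, `i_wx ∈ [w_x]` (1-based indices). -/
def IsPadEntry (cx hx wx ph pw : ℕ) (r c : ℕ) : Prop :=
  ∃ icx ∈ Icc 1 cx, ∃ ihx ∈ Icc 1 hx, ∃ iwx ∈ Icc 1 wx,
    r = (icx - 1) * ((hx + 2 * ph) * (wx + 2 * pw)) + ph * (wx + 2 * pw) +
          (ihx - 1) * (wx + 2 * pw) + pw + iwx ∧
    c = (icx - 1) * (hx * wx) + (ihx - 1) * wx + iwx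

/-- The row index `𝔧_row = (i_cx−1)h_y·w_y + (i_hy−1)w_y + i_wy` of `W^{ap}`. -/
def apRow (hy wy : ℕ) (icx ihy iwy : ℕ) : ℕ :=
  (icx - 1) * (hy * wy) + (ihy - 1) * wy + iwy

/-- The column index `𝔧_col = (i_cx−1)(h_x+2p_h)(w_x+2p_w) + (i_wy−1)s_w + i_wp
+ (i_hp−1)(w_x+2p_w) + (i_hy−1)(w_x+2p_w)s_h` of `W^{ap}`. -/
def apCol (hx wx ph pw sh sw : ℕ) (icx ihy iwy ihp iwp : ℕ) : ℕ :=
  (icx - 1) * ((hx + 2 * ph) * (wx + 2 * pw)) + (iwy - 1) * sw + iwp +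
    (ihp - 1) * (wx + 2 * pw) + (ihy - 1) * ((wx + 2 * pw) * sh)

/-- Lemma 2 of the paper: an average pooling layer equals a linear map on
row-major flattened vectors: `ỹ = W^{ap}·W̃^{p}·x̃`.

Tensors are encoded as functions of their 1-based indices, matrices as functions of their
1-based row/column indices, and vectors as functions of their 1-based positions; all
index formulas match the statement. -/
theorem avgpool_layer_eq_linear
    -- dimensions and hyperparameters
    (cx hx wx : ℕ) (hp wp : ℕ) (hhp : 0 < hp) (hwp : 0 < wp) (ph pw : ℕ)
    (sh sw : ℕ) (hsh : 0 < sh) (hsw : 0 < sw)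
    (hy wy : ℕ) (hhy0 : 0 < hy) (hwy0 : 0 < wy)
    (hhy : hy = (hx + ph + sh - hp) / sh) (hwy : wy = (wx + pw + sw - wp) / sw)
    -- input tensor
    (x : ℕ → ℕ → ℕ → ℝ)
    -- the average-pooling output y
    (y : ℕ → ℕ → ℕ → ℝ)
    (hydef : ∀ icx ∈ Icc 1 cx, ∀ ihy ∈ Icc 1 hy, ∀ iwy ∈ Icc 1 wy,
      y icx ihy iwy = (∑ ihp ∈ Icc 1 hp, ∑ iwp ∈ Icc 1 wp,
        (if 1 ≤ ihp + (ihy - 1) * sh - ph ∧ ihp + (ihy - 1) * sh - ph ≤ hx ∧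
            1 ≤ iwp + (iwy - 1) * sw - pw ∧ iwp + (iwy - 1) * sw - pw ≤ wx then
          x icx (ihp + (ihy - 1) * sh - ph) (iwp + (iwy - 1) * sw - pw)
        else 0)) / (hp * wp))
    -- row-major flattenings x̃ and ỹ
    (xt : ℕ → ℝ)
    (hxt : ∀ icx ∈ Icc 1 cx, ∀ ihx ∈ Icc 1 hx, ∀ iwx ∈ Icc 1 wx,
      xt ((icx - 1) * (hx * wx) + (ihx - 1) * wx + iwx) = x icx ihx iwx)
    (yt : ℕ → ℝ)
    (hyt : ∀ icx ∈ Icc 1 cx, ∀ ihy ∈ Icc 1 hy, ∀ iwy ∈ Icc 1 wy,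
      yt ((icx - 1) * (hy * wy) + (ihy - 1) * wy + iwy) = y icx ihy iwy)
    -- the padding matrix W̃ᵖ
    (Wp : ℕ → ℕ → ℝ)
    (hWp1 : ∀ r c : ℕ, IsPadEntry cx hx wx ph pw r c → Wp r c = 1)
    (hWp0 : ∀ r c : ℕ, ¬ IsPadEntry cx hx wx ph pw r c → Wp r c = 0)
    -- the average-pooling matrix W^{ap}
    (Wap : ℕ → ℕ → ℝ)
    (hWap1 : ∀ icx ∈ Icc 1 cx, ∀ ihy ∈ Icc 1 hy, ∀ iwy ∈ Icc 1 wy,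
      ∀ ihp ∈ Icc 1 hp, ∀ iwp ∈ Icc 1 wp,
        Wap (apRow hy wy icx ihy iwy) (apCol hx wx ph pw sh sw icx ihy iwy ihp iwp) =
          1 / (hp * wp))
    (hWap0 : ∀ r c : ℕ,
      (¬ ∃ icx ∈ Icc 1 cx, ∃ ihy ∈ Icc 1 hy, ∃ iwy ∈ Icc 1 wy,
          ∃ ihp ∈ Icc 1 hp, ∃ iwp ∈ Icc 1 wp,
            r = apRow hy wy icx ihy iwy ∧
            c = apCol hx wx ph pw sh sw icx ihy iwy ihp iwp) → Wap r c = 0) :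
    -- conclusion: ỹ = W^{ap}·W̃^{p}·x̃
    ∀ p ∈ Icc 1 (cx * (hy * wy)),
      yt p = ∑ q ∈ Icc 1 (cx * (hx * wx)),
        (∑ r ∈ Icc 1 (cx * ((hx + 2 * ph) * (wx + 2 * pw))), Wap p r * Wp r q) * xt q := by
  intro p hpmem
  obtain ⟨icx, hicx, ihy, hihy, iwy, hiwy, hpeq⟩ := my_flatten_surj hpmem
  have hicx' := mem_Icc.mp hicx
  have hihy' := mem_Icc.mp hihy
  have hiwy' := mem_Icc.mp hiwy
  have h1h : hy * sh ≤ hx + ph + sh - hp := by rw [hhy]; exact Nat.div_mul_le_self _ _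
  have h1w : wy * sw ≤ wx + pw + sw - wp := by rw [hwy]; exact Nat.div_mul_le_self _ _
  have hrow_mem : ∀ a ∈ Icc 1 hp, a + (ihy-1)*sh ∈ Icc 1 (hx + 2*ph) := by
    intro a ha
    have ha' := mem_Icc.mp ha
    simp only [mem_Icc]
    exact ⟨le_trans ha'.1 (Nat.le_add_right _ _),
      my_window_bound hsh hhy0 h1h ha'.2 hihy'.1 hihy'.2⟩
  have hcol_mem : ∀ b ∈ Icc 1 wp, b + (iwy-1)*sw ∈ Icc 1 (wx + 2*pw) := by
    intro b hb
    have hb' := mem_Icc.mp hb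
    simp only [mem_Icc]
    exact ⟨le_trans hb'.1 (Nat.le_add_right _ _),
      my_window_bound hsw hwy0 h1w hb'.2 hiwy'.1 hiwy'.2⟩
  -- normal form of apCol
  have apColEq : ∀ a b : ℕ, 1 ≤ a →
      apCol hx wx ph pw sh sw icx ihy iwy a b
        = (icx-1)*((hx+2*ph)*(wx+2*pw)) + ((a + (ihy-1)*sh) - 1)*(wx+2*pw)
            + (b + (iwy-1)*sw) := by
    intro a b ha
    unfold apCol
    have h1 : a + (ihy-1)*sh - 1 = (a-1) + (ihy-1)*sh := by
      revert ha
      generalize (ihy-1)*sh = X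
      intro ha
      omega
    rw [h1]; ring
  -- normal form of the pad-entry row index
  have padRowEq : ∀ i j k : ℕ, 1 ≤ j →
      (i-1)*((hx+2*ph)*(wx+2*pw)) + ph*(wx+2*pw) + (j-1)*(wx+2*pw) + pw + k
        = (i-1)*((hx+2*ph)*(wx+2*pw)) + ((ph + j) - 1)*(wx+2*pw) + (pw + k) := by
    intro i j k hj
    have h1 : ph + j - 1 = ph + (j-1) := by omega
    rw [h1]; ring
  -- the inner sum over q
  have inner : ∀ jr ∈ Icc 1 (hx+2*ph), ∀ jc ∈ Icc 1 (wx+2*pw),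
      (∑ q ∈ Icc 1 (cx*(hx*wx)),
        Wp ((icx-1)*((hx+2*ph)*(wx+2*pw)) + (jr-1)*(wx+2*pw) + jc) q * xt q)
      = if 1 ≤ jr - ph ∧ jr - ph ≤ hx ∧ 1 ≤ jc - pw ∧ jc - pw ≤ wx
          then x icx (jr - ph) (jc - pw) else 0 := by
    intro jr hjrm jc hjcm
    have hjr := mem_Icc.mp hjrm
    have hjc := mem_Icc.mp hjcm
    by_cases hC : 1 ≤ jr - ph ∧ jr - ph ≤ hx ∧ 1 ≤ jc - pw ∧ jc - pw ≤ wx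
    · rw [if_pos hC]
      have hihx0 : jr - ph ∈ Icc 1 hx := by simp only [mem_Icc]; omega
      have hiwx0 : jc - pw ∈ Icc 1 wx := by simp only [mem_Icc]; omega
      have req : (icx-1)*((hx+2*ph)*(wx+2*pw)) + (jr-1)*(wx+2*pw) + jc
          = (icx-1)*((hx+2*ph)*(wx+2*pw)) + ph*(wx+2*pw) + ((jr-ph)-1)*(wx+2*pw)
              + pw + (jc-pw) := by
        rw [padRowEq icx (jr-ph) (jc-pw) hC.1]
        have e1 : ph + (jr - ph) = jr := by omega
        have e2 : pw + (jc - pw) = jc := by omega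
        rw [e1, e2]
      have hpad : IsPadEntry cx hx wx ph pw
          ((icx-1)*((hx+2*ph)*(wx+2*pw)) + (jr-1)*(wx+2*pw) + jc)
          ((icx-1)*(hx*wx) + ((jr-ph)-1)*wx + (jc-pw)) :=
        ⟨icx, hicx, jr-ph, hihx0, jc-pw, hiwx0, req, rfl⟩
      rw [Finset.sum_eq_single ((icx-1)*(hx*wx) + ((jr-ph)-1)*wx + (jc-pw))]
      · rw [hWp1 _ _ hpad, one_mul, hxt icx hicx (jr-ph) hihx0 (jc-pw) hiwx0]
      · intro q hqmem hqne
        rw [hWp0, zero_mul]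
        rintro ⟨i', hi', j', hj', k', hk', re, ce⟩
        have hj'' := mem_Icc.mp hj'
        have hk'' := mem_Icc.mp hk'
        rw [padRowEq i' j' k' hj''.1] at re
        have hmemj : ph + j' ∈ Icc 1 (hx+2*ph) := by simp only [mem_Icc]; omega
        have hmemk : pw + k' ∈ Icc 1 (wx+2*pw) := by simp only [mem_Icc]; omega
        obtain ⟨e1, e2, e3⟩ := my_triple_inj hicx hjrm hjcm hi' hmemj hmemk re
        apply hqne
        rw [ce, ← e1]
        have e4 : j' = jr - ph := by omega
        have e5 : k' = jc - pw := by omega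
        rw [e4, e5]
      · intro hnot
        exact absurd (my_flatten_mem hicx hihx0 hiwx0) hnot
    · rw [if_neg hC]
      apply Finset.sum_eq_zero
      intro q hq
      rw [hWp0, zero_mul]
      rintro ⟨i', hi', j', hj', k', hk', re, ce⟩
      have hj'' := mem_Icc.mp hj'
      have hk'' := mem_Icc.mp hk'
      rw [padRowEq i' j' k' hj''.1] at re
      have hmemj : ph + j' ∈ Icc 1 (hx+2*ph) := by simp only [mem_Icc]; omega
      have hmemk : pw + k' ∈ Icc 1 (wx+2*pw) := by simp only [mem_Icc]; omega
      obtain ⟨e1, e2, e3⟩ := my_triple_inj hicx hjrm hjcm hi' hmemj hmemk re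
      exact hC (by omega)
  -- now the main computation
  set S : Finset ℕ :=
    (Icc 1 hp ×ˢ Icc 1 wp).image
      (fun z : ℕ × ℕ => apCol hx wx ph pw sh sw icx ihy iwy z.1 z.2) with hSdef
  have hSsub : S ⊆ Icc 1 (cx * ((hx + 2 * ph) * (wx + 2 * pw))) := by
    intro r hr
    rw [hSdef, mem_image] at hr
    obtain ⟨⟨a, b⟩, hab, rfl⟩ := hr
    rw [mem_product] at hab
    rw [apColEq a b (mem_Icc.mp hab.1).1]
    exact my_flatten_mem hicx (hrow_mem a hab.1) (hcol_mem b hab.2)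
  have hzero : ∀ r ∈ Icc 1 (cx * ((hx + 2 * ph) * (wx + 2 * pw))), r ∉ S →
      (∑ q ∈ Icc 1 (cx * (hx * wx)), Wap p r * (Wp r q * xt q)) = 0 := by
    intro r _ hrS
    have hw : Wap p r = 0 := by
      apply hWap0
      rintro ⟨icx2, hicx2, ihy2, hihy2, iwy2, hiwy2, a, ha, b, hb, hpe, hce⟩
      have hflat : (icx2-1)*(hy*wy) + (ihy2-1)*wy + iwy2
          = (icx-1)*(hy*wy) + (ihy-1)*wy + iwy := hpe.symm.trans hpeq
      obtain ⟨e1, e2, e3⟩ := my_triple_inj hicx2 hihy2 hiwy2 hicx hihy hiwy hflat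
      apply hrS
      rw [hSdef, mem_image]
      refine ⟨(a, b), mem_product.mpr ⟨ha, hb⟩, ?_⟩
      rw [hce, e1, e2, e3]
    simp [hw]
  have hinj : ∀ z ∈ Icc 1 hp ×ˢ Icc 1 wp, ∀ z' ∈ Icc 1 hp ×ˢ Icc 1 wp,
      apCol hx wx ph pw sh sw icx ihy iwy z.1 z.2
        = apCol hx wx ph pw sh sw icx ihy iwy z'.1 z'.2 → z = z' := by
    rintro ⟨a, b⟩ hab ⟨a', b'⟩ hab' h
    rw [mem_product] at hab hab'
    rw [apColEq a b (mem_Icc.mp hab.1).1, apColEq a' b' (mem_Icc.mp hab'.1).1] at h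
    obtain ⟨-, e2, e3⟩ := my_triple_inj hicx (hrow_mem a hab.1) (hcol_mem b hab.2)
      hicx (hrow_mem a' hab'.1) (hcol_mem b' hab'.2) h
    have ea : a = a' := Nat.add_right_cancel e2
    have eb : b = b' := Nat.add_right_cancel e3
    rw [ea, eb]
  calc yt p
      = y icx ihy iwy := by rw [hpeq]; exact hyt icx hicx ihy hihy iwy hiwy
    _ = (∑ a ∈ Icc 1 hp, ∑ b ∈ Icc 1 wp,
          (if 1 ≤ a + (ihy - 1) * sh - ph ∧ a + (ihy - 1) * sh - ph ≤ hx ∧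
              1 ≤ b + (iwy - 1) * sw - pw ∧ b + (iwy - 1) * sw - pw ≤ wx then
            x icx (a + (ihy - 1) * sh - ph) (b + (iwy - 1) * sw - pw)
          else 0)) / (hp * wp) := hydef icx hicx ihy hihy iwy hiwy
    _ = ∑ a ∈ Icc 1 hp, ∑ b ∈ Icc 1 wp, (1 / ((hp : ℝ) * wp)) *
          (if 1 ≤ a + (ihy - 1) * sh - ph ∧ a + (ihy - 1) * sh - ph ≤ hx ∧
              1 ≤ b + (iwy - 1) * sw - pw ∧ b + (iwy - 1) * sw - pw ≤ wx then
            x icx (a + (ihy - 1) * sh - ph) (b + (iwy - 1) * sw - pw)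
          else 0) := by
        rw [Finset.sum_div]
        refine Finset.sum_congr rfl fun a _ => ?_
        rw [Finset.sum_div]
        refine Finset.sum_congr rfl fun b _ => ?_
        ring
    _ = ∑ a ∈ Icc 1 hp, ∑ b ∈ Icc 1 wp,
          Wap p (apCol hx wx ph pw sh sw icx ihy iwy a b) *
          (∑ q ∈ Icc 1 (cx * (hx * wx)),
            Wp (apCol hx wx ph pw sh sw icx ihy iwy a b) q * xt q) := by
        refine Finset.sum_congr rfl fun a ha => ?_
        refine Finset.sum_congr rfl fun b hb => ?_
        have hwapv : Wap p (apCol hx wx ph pw sh sw icx ihy iwy a b) = 1 / ((hp:ℝ) * wp) := by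
          rw [hpeq]
          exact hWap1 icx hicx ihy hihy iwy hiwy a ha b hb
        rw [hwapv]
        congr 1
        rw [apColEq a b (mem_Icc.mp ha).1,
          inner (a + (ihy-1)*sh) (hrow_mem a ha) (b + (iwy-1)*sw) (hcol_mem b hb)]
    _ = ∑ a ∈ Icc 1 hp, ∑ b ∈ Icc 1 wp,
          ∑ q ∈ Icc 1 (cx * (hx * wx)),
            Wap p (apCol hx wx ph pw sh sw icx ihy iwy a b) *
              (Wp (apCol hx wx ph pw sh sw icx ihy iwy a b) q * xt q) := by
        refine Finset.sum_congr rfl fun a _ => ?_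
        refine Finset.sum_congr rfl fun b _ => ?_
        rw [Finset.mul_sum]
    _ = ∑ z ∈ Icc 1 hp ×ˢ Icc 1 wp,
          ∑ q ∈ Icc 1 (cx * (hx * wx)),
            Wap p (apCol hx wx ph pw sh sw icx ihy iwy z.1 z.2) *
              (Wp (apCol hx wx ph pw sh sw icx ihy iwy z.1 z.2) q * xt q) := by
        rw [Finset.sum_product]
    _ = ∑ r ∈ S, ∑ q ∈ Icc 1 (cx * (hx * wx)), Wap p r * (Wp r q * xt q) := by
        rw [hSdef, Finset.sum_image hinj]
    _ = ∑ r ∈ Icc 1 (cx * ((hx + 2 * ph) * (wx + 2 * pw))),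
          ∑ q ∈ Icc 1 (cx * (hx * wx)), Wap p r * (Wp r q * xt q) :=
        Finset.sum_subset hSsub hzero
    _ = ∑ q ∈ Icc 1 (cx * (hx * wx)),
          (∑ r ∈ Icc 1 (cx * ((hx + 2 * ph) * (wx + 2 * pw))), Wap p r * Wp r q) * xt q := by
        rw [Finset.sum_comm]
        refine Finset.sum_congr rfl fun q _ => ?_
        rw [Finset.sum_mul]
        refine Finset.sum_congr rfl fun r _ => ?_
        ring
end

section
/- Let h_p, w_p ∈ ℕ_{>0} be pooling window sizes, p_h, p_w ∈ ℕ padding sizes, s_h, s_w ∈ ℕ_{>0} strides, and x ∈ ℝ^{c_x×h_x×w_x} an input tensor. Let h_y, w_y ∈ ℕ_{>0} be the output height and width. Define the max-pooling output y ∈ ℝ^{c_x×h_y×w_y} by y[i_{c_x},i_{h_y},i_{w_y}] = max_{i_{h_p} ∈ [h_p], i_{w_p} ∈ [w_p]} x̄[i_{c_x},j_h,j_w], where j_h = i_{h_p}+(i_{h_y}−1)s_h−p_h, j_w = i_{w_p}+(i_{w_y}−1)s_w−p_w, and x̄[i_{c_x},j_h,j_w] = x[i_{c_x},j_h,j_w]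 if 1 ≤ j_h ≤ h_x and 1 ≤ j_w ≤ w_x, and 0 otherwise. Let x̃ and ỹ be the row-major flattenings of x and y. Then for every i_{c_x} ∈ [c_x], i_{h_y} ∈ [h_y], i_{w_y} ∈ [w_y], the entry of ỹ at position (i_{c_x}−1)h_y·w_y + (i_{h_y}−1)w_y + i_{w_y} equals max(W^{mp}_{i_{c_x},i_{h_y},i_{w_y}}·W̃^{p}·x̃), where max(·) of a vector denotes the maximum of its components, W̃^{p} ∈ ℝ^{(c_x·(h_x+2p_h)·(w_x+2p_w))×(c_x·h_x·w_x)} is the zero matrix except for entries equal to 1 at row 𝔦_row = (i_{c_x}−1)(h_x+2p_h)(w_x+2p_w) + p_h(w_x+2p_w) + (i_{h_x}−1)(w_x+2p_w) + p_w + i_{w_x} and column 𝔦_col = (i_{c_x}−1)h_x·w_x + (i_{h_x}−1)w_x + i_{w_x} for all i_{c_x} ∈ [c_x], i_{h_x} ∈ [h_x], i_{w_x} ∈ [w_x], and W^{mp}_{i_{c_x},i_{h_y},i_{w_y}} ∈ ℝ^{(h_p·w_p)×(c_x·(h_x+2p_h)·(w_x+2p_w))} is the zero matrix except for entries equal to 1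 at row 𝔧_row = (i_{h_p}−1)w_p + i_{w_p} and column 𝔧_col = (i_{c_x}−1)(h_x+2p_h)(w_x+2p_w) + (i_{w_y}−1)s_w + i_{w_p} + (i_{h_p}−1)(w_x+2p_w) + (i_{h_y}−1)(w_x+2p_w)s_h, for all i_{h_p} ∈ [h_p], i_{w_p} ∈ [w_p]. -/
open Finset

/-- The row index `𝔧_row = (i_hp−1)w_p + i_wp` of `W^{mp}_{i_cx,i_hy,i_wy}`. -/
def mpRow (wp : ℕ) (ihp iwp : ℕ) : ℕ := (ihp - 1) * wp + iwp

/-- The column index `𝔧_col = (i_cx−1)(h_x+2p_h)(w_x+2p_w) + (i_wy−1)s_w + i_wp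
+ (i_hp−1)(w_x+2p_w) + (i_hy−1)(w_x+2p_w)s_h` of `W^{mp}_{i_cx,i_hy,i_wy}`. -/
def mpCol (hx wx ph pw sh sw : ℕ) (icx ihy iwy ihp iwp : ℕ) : ℕ :=
  (icx - 1) * ((hx + 2 * ph) * (wx + 2 * pw)) + (iwy - 1) * sw + iwp +
    (ihp - 1) * (wx + 2 * pw) + (ihy - 1) * ((wx + 2 * pw) * sh)

lemma dec1 {W a1 b1 a2 b2 : ℕ} (h1 : b1 < W) (h2 : b2 < W)
    (h : a1 * W + b1 = a2 * W + b2) : a1 = a2 ∧ b1 = b2 := by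
  have hb : b1 = b2 := by
    have e1 : (a1 * W + b1) % W = b1 := by
      simp [Nat.add_mod, Nat.mod_eq_of_lt h1]
    have e2 : (a2 * W + b2) % W = b2 := by
      simp [Nat.add_mod, Nat.mod_eq_of_lt h2]
    rw [← e1, ← e2, h]
  subst hb
  have := Nat.eq_of_mul_eq_mul_right (show 0 < W by omega) (by omega : a1 * W = a2 * W)
  exact ⟨this, rfl⟩

lemma bnd {n s d k i j : ℕ} (hs : 0 < s) (hn : 0 < n) (hn' : n = (d + s - k) / s)
    (hi : i ≤ n) (hj : j ≤ k) (hi1 : 1 ≤ i) : j + (i - 1) * s ≤ d := by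
  have f1 : n * s ≤ d + s - k := by rw [hn']; exact Nat.div_mul_le_self _ _
  have f2 : (i - 1) * s ≤ (n - 1) * s := Nat.mul_le_mul_right _ (by omega)
  have f3 : (n - 1) * s = n * s - s := by rw [Nat.sub_mul, one_mul]
  have f4 : s ≤ n * s := Nat.le_mul_of_pos_left _ hn
  omega

lemma mpCol_eq (hx wx ph pw sh sw icx ihy iwy ihp iwp : ℕ) :
    mpCol hx wx ph pw sh sw icx ihy iwy ihp iwp =
      (icx - 1) * ((hx + 2 * ph) * (wx + 2 * pw)) +
        ((ihp - 1) + (ihy - 1) * sh) * (wx + 2 * pw) + (iwp + (iwy - 1) * sw) := by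
  unfold mpCol; ring



lemma pad_entry_iff (cx hx wx ph pw sh sw hp wp hy wy : ℕ)
    (hsh : 0 < sh) (hsw : 0 < sw) (hhy0 : 0 < hy) (hwy0 : 0 < wy)
    (hhy : hy = (hx + ph + sh - hp) / sh) (hwy : wy = (wx + pw + sw - wp) / sw)
    (icx ihy iwy ihp iwp : ℕ)
    (h1 : icx ∈ Icc 1 cx) (h2 : ihy ∈ Icc 1 hy) (h3 : iwy ∈ Icc 1 wy)
    (h4 : ihp ∈ Icc 1 hp) (h5 : iwp ∈ Icc 1 wp) (c : ℕ) :
    IsPadEntry cx hx wx ph pw (mpCol hx wx ph pw sh sw icx ihy iwy ihp iwp) c ↔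
      ph + 1 ≤ ihp + (ihy - 1) * sh ∧ pw + 1 ≤ iwp + (iwy - 1) * sw ∧
        c = (icx - 1) * (hx * wx) + (ihp + (ihy - 1) * sh - ph - 1) * wx +
            (iwp + (iwy - 1) * sw - pw) := by
  simp only [mem_Icc] at h1 h2 h3 h4 h5
  have hbnd1 : ihp + (ihy - 1) * sh ≤ hx + ph := bnd hsh hhy0 hhy h2.2 h4.2 h2.1
  have hbnd2 : iwp + (iwy - 1) * sw ≤ wx + pw := bnd hsw hwy0 hwy h3.2 h5.2 h3.1
  have hcol : mpCol hx wx ph pw sh sw icx ihy iwy ihp iwp =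
      (icx - 1) * ((hx + 2 * ph) * (wx + 2 * pw)) +
        ((ihp - 1) + (ihy - 1) * sh) * (wx + 2 * pw) + (iwp + (iwy - 1) * sw) :=
    mpCol_eq ..
  constructor
  · rintro ⟨icx', hicx', ihx, hihx, iwx, hiwx, hr, hc⟩
    simp only [mem_Icc] at hicx' hihx hiwx
    rw [hcol] at hr
    have hr2 : ((icx - 1) * (hx + 2 * ph) + ((ihp - 1) + (ihy - 1) * sh)) * (wx + 2 * pw)
          + (iwp + (iwy - 1) * sw - 1) =
        ((icx' - 1) * (hx + 2 * ph) + (ph + (ihx - 1))) * (wx + 2 * pw)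
          + (pw + iwx - 1) := by
      have e1 : (icx - 1) * ((hx + 2 * ph) * (wx + 2 * pw)) +
          ((ihp - 1) + (ihy - 1) * sh) * (wx + 2 * pw) =
          ((icx - 1) * (hx + 2 * ph) + ((ihp - 1) + (ihy - 1) * sh)) * (wx + 2 * pw) := by
        ring
      have e2 : (icx' - 1) * ((hx + 2 * ph) * (wx + 2 * pw)) +
          ph * (wx + 2 * pw) + (ihx - 1) * (wx + 2 * pw) =
          ((icx' - 1) * (hx + 2 * ph) + (ph + (ihx - 1))) * (wx + 2 * pw) := by
        ring
      omega
    obtain ⟨hq, hrem⟩ := dec1 (by omega) (by omega) hr2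
    obtain ⟨hq1, hq2⟩ := dec1 (W := hx + 2 * ph) (by omega) (by omega) hq
    have e3 : icx' - 1 = icx - 1 := by omega
    have e4 : ihx - 1 = ihp + (ihy - 1) * sh - ph - 1 := by omega
    have e5 : iwx = iwp + (iwy - 1) * sw - pw := by omega
    refine ⟨by omega, by omega, ?_⟩
    rw [hc, e3, e4, e5]
  · rintro ⟨g1, g2, hc⟩
    refine ⟨icx, mem_Icc.mpr ⟨h1.1, h1.2⟩, ihp + (ihy - 1) * sh - ph,
      mem_Icc.mpr ⟨by omega, by omega⟩, iwp + (iwy - 1) * sw - pw,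
      mem_Icc.mpr ⟨by omega, by omega⟩, ?_, hc⟩
    rw [hcol]
    have e6 : ihp + (ihy - 1) * sh - ph - 1 = ((ihp - 1) + (ihy - 1) * sh) - ph := by omega
    have e8 : ph * (wx + 2 * pw) + (((ihp - 1) + (ihy - 1) * sh) - ph) * (wx + 2 * pw) =
        ((ihp - 1) + (ihy - 1) * sh) * (wx + 2 * pw) := by
      rw [← Nat.add_mul]
      congr 1
      omega
    rw [e6]
    omega

lemma sum_pad (cx hx wx ph pw sh sw hp wp hy wy : ℕ)
    (hsh : 0 < sh) (hsw : 0 < sw) (hhy0 : 0 < hy) (hwy0 : 0 < wy)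
    (hhy : hy = (hx + ph + sh - hp) / sh) (hwy : wy = (wx + pw + sw - wp) / sw)
    (x : ℕ → ℕ → ℕ → ℝ) (xt : ℕ → ℝ)
    (hxt : ∀ icx ∈ Icc 1 cx, ∀ ihx ∈ Icc 1 hx, ∀ iwx ∈ Icc 1 wx,
      xt ((icx - 1) * (hx * wx) + (ihx - 1) * wx + iwx) = x icx ihx iwx)
    (Wp : ℕ → ℕ → ℝ)
    (hWp1 : ∀ r c : ℕ, IsPadEntry cx hx wx ph pw r c → Wp r c = 1)
    (hWp0 : ∀ r c : ℕ, ¬ IsPadEntry cx hx wx ph pw r c → Wp r c = 0)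
    (icx ihy iwy ihp iwp : ℕ)
    (h1 : icx ∈ Icc 1 cx) (h2 : ihy ∈ Icc 1 hy) (h3 : iwy ∈ Icc 1 wy)
    (h4 : ihp ∈ Icc 1 hp) (h5 : iwp ∈ Icc 1 wp) :
    ∑ q ∈ Icc 1 (cx * (hx * wx)),
        Wp (mpCol hx wx ph pw sh sw icx ihy iwy ihp iwp) q * xt q =
      if 1 ≤ ihp + (ihy - 1) * sh - ph ∧ ihp + (ihy - 1) * sh - ph ≤ hx ∧
          1 ≤ iwp + (iwy - 1) * sw - pw ∧ iwp + (iwy - 1) * sw - pw ≤ wx then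
        x icx (ihp + (ihy - 1) * sh - ph) (iwp + (iwy - 1) * sw - pw)
      else 0 := by
  have h1' := mem_Icc.mp h1
  have h2' := mem_Icc.mp h2
  have h3' := mem_Icc.mp h3
  have h4' := mem_Icc.mp h4
  have h5' := mem_Icc.mp h5
  have hbnd1 : ihp + (ihy - 1) * sh ≤ hx + ph := bnd hsh hhy0 hhy h2'.2 h4'.2 h2'.1
  have hbnd2 : iwp + (iwy - 1) * sw ≤ wx + pw := bnd hsw hwy0 hwy h3'.2 h5'.2 h3'.1
  by_cases hC : ph + 1 ≤ ihp + (ihy - 1) * sh ∧ pw + 1 ≤ iwp + (iwy - 1) * sw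
  · rw [if_pos (by omega)]
    have hjh : ihp + (ihy - 1) * sh - ph ∈ Icc 1 hx := mem_Icc.mpr ⟨by omega, by omega⟩
    have hjw : iwp + (iwy - 1) * sw - pw ∈ Icc 1 wx := mem_Icc.mpr ⟨by omega, by omega⟩
    have hmem : (icx - 1) * (hx * wx) + (ihp + (ihy - 1) * sh - ph - 1) * wx +
        (iwp + (iwy - 1) * sw - pw) ∈ Icc 1 (cx * (hx * wx)) := by
      have f1 : (icx - 1) * (hx * wx) ≤ (cx - 1) * (hx * wx) :=
        Nat.mul_le_mul_right _ (by omega)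
      have f2 : (ihp + (ihy - 1) * sh - ph - 1) * wx ≤ (hx - 1) * wx :=
        Nat.mul_le_mul_right _ (by omega)
      have f3 : (hx - 1) * wx + wx = hx * wx := by
        have e : hx - 1 + 1 = hx := by omega
        calc (hx - 1) * wx + wx = ((hx - 1) + 1) * wx := by ring
          _ = hx * wx := by rw [e]
      have f4 : (cx - 1) * (hx * wx) + hx * wx = cx * (hx * wx) := by
        have e : cx - 1 + 1 = cx := by omega
        calc (cx - 1) * (hx * wx) + hx * wx = ((cx - 1) + 1) * (hx * wx) := by ring
          _ = cx * (hx * wx) := by rw [e]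
      exact mem_Icc.mpr ⟨by omega, by omega⟩
    rw [Finset.sum_eq_single_of_mem _ hmem (fun q hq hne => by
      rw [hWp0 _ _ (fun hpe => hne ((pad_entry_iff cx hx wx ph pw sh sw hp wp hy wy
        hsh hsw hhy0 hwy0 hhy hwy icx ihy iwy ihp iwp h1 h2 h3 h4 h5 q).mp hpe).2.2),
        zero_mul]),
      hWp1 _ _ ((pad_entry_iff cx hx wx ph pw sh sw hp wp hy wy
        hsh hsw hhy0 hwy0 hhy hwy icx ihy iwy ihp iwp h1 h2 h3 h4 h5 _).mpr
        ⟨hC.1, hC.2, rfl⟩), one_mul]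
    exact hxt icx h1 _ hjh _ hjw
  · rw [if_neg (by omega)]
    refine Finset.sum_eq_zero fun q hq => ?_
    rw [hWp0 _ _ (fun hpe => hC ⟨(((pad_entry_iff cx hx wx ph pw sh sw hp wp hy wy
      hsh hsw hhy0 hwy0 hhy hwy icx ihy iwy ihp iwp h1 h2 h3 h4 h5 q).mp hpe)).1,
      (((pad_entry_iff cx hx wx ph pw sh sw hp wp hy wy
      hsh hsw hhy0 hwy0 hhy hwy icx ihy iwy ihp iwp h1 h2 h3 h4 h5 q).mp hpe)).2.1⟩),
      zero_mul]

lemma sum_row (cx hx wx ph pw sh sw hp wp hy wy : ℕ)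
    (hsh : 0 < sh) (hsw : 0 < sw) (hhy0 : 0 < hy) (hwy0 : 0 < wy)
    (hhy : hy = (hx + ph + sh - hp) / sh) (hwy : wy = (wx + pw + sw - wp) / sw)
    (S : ℕ → ℝ) (Wmp : ℕ → ℕ → ℕ → ℕ → ℕ → ℝ)
    (hWmp1 : ∀ icx ∈ Icc 1 cx, ∀ ihy ∈ Icc 1 hy, ∀ iwy ∈ Icc 1 wy,
      ∀ ihp ∈ Icc 1 hp, ∀ iwp ∈ Icc 1 wp,
        Wmp icx ihy iwy (mpRow wp ihp iwp) (mpCol hx wx ph pw sh sw icx ihy iwy ihp iwp) = 1)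
    (hWmp0 : ∀ icx ∈ Icc 1 cx, ∀ ihy ∈ Icc 1 hy, ∀ iwy ∈ Icc 1 wy, ∀ r c : ℕ,
      (¬ ∃ ihp ∈ Icc 1 hp, ∃ iwp ∈ Icc 1 wp,
          r = mpRow wp ihp iwp ∧ c = mpCol hx wx ph pw sh sw icx ihy iwy ihp iwp) →
        Wmp icx ihy iwy r c = 0)
    (icx ihy iwy ihp iwp : ℕ)
    (h1 : icx ∈ Icc 1 cx) (h2 : ihy ∈ Icc 1 hy) (h3 : iwy ∈ Icc 1 wy)
    (h4 : ihp ∈ Icc 1 hp) (h5 : iwp ∈ Icc 1 wp) :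
    ∑ r ∈ Icc 1 (cx * ((hx + 2 * ph) * (wx + 2 * pw))),
        Wmp icx ihy iwy (mpRow wp ihp iwp) r * S r =
      S (mpCol hx wx ph pw sh sw icx ihy iwy ihp iwp) := by
  have h1' := mem_Icc.mp h1
  have h2' := mem_Icc.mp h2
  have h3' := mem_Icc.mp h3
  have h4' := mem_Icc.mp h4
  have h5' := mem_Icc.mp h5
  have hbnd1 : ihp + (ihy - 1) * sh ≤ hx + ph := bnd hsh hhy0 hhy h2'.2 h4'.2 h2'.1
  have hbnd2 : iwp + (iwy - 1) * sw ≤ wx + pw := bnd hsw hwy0 hwy h3'.2 h5'.2 h3'.1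
  have hcol : mpCol hx wx ph pw sh sw icx ihy iwy ihp iwp =
      (icx - 1) * ((hx + 2 * ph) * (wx + 2 * pw)) +
        ((ihp - 1) + (ihy - 1) * sh) * (wx + 2 * pw) + (iwp + (iwy - 1) * sw) :=
    mpCol_eq ..
  have hmem : mpCol hx wx ph pw sh sw icx ihy iwy ihp iwp ∈
      Icc 1 (cx * ((hx + 2 * ph) * (wx + 2 * pw))) := by
    rw [hcol]
    have f1 : (icx - 1) * ((hx + 2 * ph) * (wx + 2 * pw)) ≤
        (cx - 1) * ((hx + 2 * ph) * (wx + 2 * pw)) := Nat.mul_le_mul_right _ (by omega)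
    have f2 : ((ihp - 1) + (ihy - 1) * sh) * (wx + 2 * pw) ≤
        (hx + 2 * ph - 1) * (wx + 2 * pw) := Nat.mul_le_mul_right _ (by omega)
    have f3 : (hx + 2 * ph - 1) * (wx + 2 * pw) + (wx + 2 * pw) =
        (hx + 2 * ph) * (wx + 2 * pw) := by
      have e : hx + 2 * ph - 1 + 1 = hx + 2 * ph := by omega
      calc (hx + 2 * ph - 1) * (wx + 2 * pw) + (wx + 2 * pw)
          = ((hx + 2 * ph - 1) + 1) * (wx + 2 * pw) := by ring
        _ = _ := by rw [e]
    have f4 : (cx - 1) * ((hx + 2 * ph) * (wx + 2 * pw)) +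
        (hx + 2 * ph) * (wx + 2 * pw) = cx * ((hx + 2 * ph) * (wx + 2 * pw)) := by
      have e : cx - 1 + 1 = cx := by omega
      calc (cx - 1) * ((hx + 2 * ph) * (wx + 2 * pw)) + (hx + 2 * ph) * (wx + 2 * pw)
          = ((cx - 1) + 1) * ((hx + 2 * ph) * (wx + 2 * pw)) := by ring
        _ = _ := by rw [e]
    exact mem_Icc.mpr ⟨by omega, by omega⟩
  rw [Finset.sum_eq_single_of_mem _ hmem (fun r hr hne => by
    rw [hWmp0 icx h1 ihy h2 iwy h3 _ _ ?_, zero_mul]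
    rintro ⟨ihp', hp', iwp', wp', hj, hcq⟩
    have hp'' := mem_Icc.mp hp'
    have wp'' := mem_Icc.mp wp'
    have hj' : (ihp - 1) * wp + (iwp - 1) = (ihp' - 1) * wp + (iwp' - 1) := by
      unfold mpRow at hj; omega
    obtain ⟨ea, eb⟩ := dec1 (by omega) (by omega) hj'
    have e1 : ihp' = ihp := by omega
    have e2 : iwp' = iwp := by omega
    rw [e1, e2] at hcq
    exact hne hcq),
    hWmp1 icx h1 ihy h2 iwy h3 ihp h4 iwp h5, one_mul]

/-- Lemma 3 of the paper: a max pooling layer equals a fully-connected layer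
with maxout activation on row-major flattened vectors: for every output index
`(i_cx, i_hy, i_wy)`, the corresponding entry of `ỹ` equals
`max(W^{mp}_{i_cx,i_hy,i_wy}·W̃^{p}·x̃)`.

Tensors are encoded as functions of their 1-based indices, matrices as functions of their
1-based row/column indices, and vectors as functions of their 1-based positions; all
index formulas match the statement. -/
theorem maxpool_layer_eq_maxout
    -- dimensions and hyperparameters
    (cx hx wx : ℕ) (hp wp : ℕ) (hhp : 0 < hp) (hwp : 0 < wp) (ph pw : ℕ)
    (sh sw : ℕ) (hsh : 0 < sh) (hsw : 0 < sw)
    (hy wy : ℕ) (hhy0 : 0 < hy) (hwy0 : 0 < wy)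
    (hhy : hy = (hx + ph + sh - hp) / sh) (hwy : wy = (wx + pw + sw - wp) / sw)
    -- input tensor
    (x : ℕ → ℕ → ℕ → ℝ)
    -- the max-pooling output y
    (y : ℕ → ℕ → ℕ → ℝ)
    (hydef : ∀ icx ∈ Icc 1 cx, ∀ ihy ∈ Icc 1 hy, ∀ iwy ∈ Icc 1 wy,
      y icx ihy iwy = ((Icc 1 hp) ×ˢ (Icc 1 wp)).sup'
        (Finset.Nonempty.product (Finset.nonempty_Icc.mpr hhp) (Finset.nonempty_Icc.mpr hwp))
        (fun q =>
          if 1 ≤ q.1 + (ihy - 1) * sh - ph ∧ q.1 + (ihy - 1) * sh - ph ≤ hx ∧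
              1 ≤ q.2 + (iwy - 1) * sw - pw ∧ q.2 + (iwy - 1) * sw - pw ≤ wx then
            x icx (q.1 + (ihy - 1) * sh - ph) (q.2 + (iwy - 1) * sw - pw)
          else 0))
    -- row-major flattenings x̃ and ỹ
    (xt : ℕ → ℝ)
    (hxt : ∀ icx ∈ Icc 1 cx, ∀ ihx ∈ Icc 1 hx, ∀ iwx ∈ Icc 1 wx,
      xt ((icx - 1) * (hx * wx) + (ihx - 1) * wx + iwx) = x icx ihx iwx)
    (yt : ℕ → ℝ)
    (hyt : ∀ icx ∈ Icc 1 cx, ∀ ihy ∈ Icc 1 hy, ∀ iwy ∈ Icc 1 wy,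
      yt ((icx - 1) * (hy * wy) + (ihy - 1) * wy + iwy) = y icx ihy iwy)
    -- the padding matrix W̃ᵖ
    (Wp : ℕ → ℕ → ℝ)
    (hWp1 : ∀ r c : ℕ, IsPadEntry cx hx wx ph pw r c → Wp r c = 1)
    (hWp0 : ∀ r c : ℕ, ¬ IsPadEntry cx hx wx ph pw r c → Wp r c = 0)
    -- the max-pooling selection matrices W^{mp}_{i_cx,i_hy,i_wy}
    (Wmp : ℕ → ℕ → ℕ → ℕ → ℕ → ℝ)
    (hWmp1 : ∀ icx ∈ Icc 1 cx, ∀ ihy ∈ Icc 1 hy, ∀ iwy ∈ Icc 1 wy,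
      ∀ ihp ∈ Icc 1 hp, ∀ iwp ∈ Icc 1 wp,
        Wmp icx ihy iwy (mpRow wp ihp iwp) (mpCol hx wx ph pw sh sw icx ihy iwy ihp iwp) = 1)
    (hWmp0 : ∀ icx ∈ Icc 1 cx, ∀ ihy ∈ Icc 1 hy, ∀ iwy ∈ Icc 1 wy, ∀ r c : ℕ,
      (¬ ∃ ihp ∈ Icc 1 hp, ∃ iwp ∈ Icc 1 wp,
          r = mpRow wp ihp iwp ∧ c = mpCol hx wx ph pw sh sw icx ihy iwy ihp iwp) →
        Wmp icx ihy iwy r c = 0) :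
    -- conclusion: entrywise, ỹ = max(W^{mp}_{i_cx,i_hy,i_wy}·W̃^{p}·x̃)
    ∀ icx ∈ Icc 1 cx, ∀ ihy ∈ Icc 1 hy, ∀ iwy ∈ Icc 1 wy,
      yt ((icx - 1) * (hy * wy) + (ihy - 1) * wy + iwy) =
        (Icc 1 (hp * wp)).sup' (Finset.nonempty_Icc.mpr (Nat.mul_pos hhp hwp))
          (fun j => ∑ r ∈ Icc 1 (cx * ((hx + 2 * ph) * (wx + 2 * pw))),
            Wmp icx ihy iwy j r * ∑ q ∈ Icc 1 (cx * (hx * wx)), Wp r q * xt q) := by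
  intro icx hicx ihy hihy iwy hiwy
  rw [hyt icx hicx ihy hihy iwy hiwy, hydef icx hicx ihy hihy iwy hiwy]
  have key : ∀ ihp ∈ Icc 1 hp, ∀ iwp ∈ Icc 1 wp,
      (∑ r ∈ Icc 1 (cx * ((hx + 2 * ph) * (wx + 2 * pw))),
        Wmp icx ihy iwy (mpRow wp ihp iwp) r *
          ∑ q ∈ Icc 1 (cx * (hx * wx)), Wp r q * xt q) =
      (if 1 ≤ ihp + (ihy - 1) * sh - ph ∧ ihp + (ihy - 1) * sh - ph ≤ hx ∧
          1 ≤ iwp + (iwy - 1) * sw - pw ∧ iwp + (iwy - 1) * sw - pw ≤ wx then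
        x icx (ihp + (ihy - 1) * sh - ph) (iwp + (iwy - 1) * sw - pw) else 0) := by
    intro ihp h4 iwp h5
    rw [sum_row cx hx wx ph pw sh sw hp wp hy wy hsh hsw hhy0 hwy0 hhy hwy _
      Wmp hWmp1 hWmp0 icx ihy iwy ihp iwp hicx hihy hiwy h4 h5,
      sum_pad cx hx wx ph pw sh sw hp wp hy wy hsh hsw hhy0 hwy0 hhy hwy x xt hxt
      Wp hWp1 hWp0 icx ihy iwy ihp iwp hicx hihy hiwy h4 h5]
  apply le_antisymm
  · apply Finset.sup'_le
    rintro ⟨ihp, iwp⟩ hq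
    obtain ⟨h4, h5⟩ := Finset.mem_product.mp hq
    have h4' := mem_Icc.mp h4
    have h5' := mem_Icc.mp h5
    have hjmem : mpRow wp ihp iwp ∈ Icc 1 (hp * wp) := by
      have f2 : (ihp - 1) * wp ≤ (hp - 1) * wp := Nat.mul_le_mul_right _ (by omega)
      have f3 : (hp - 1) * wp + wp = hp * wp := by
        have e : hp - 1 + 1 = hp := by omega
        calc (hp - 1) * wp + wp = ((hp - 1) + 1) * wp := by ring
          _ = _ := by rw [e]
      exact mem_Icc.mpr ⟨by unfold mpRow; omega, by unfold mpRow; omega⟩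
    exact le_of_eq_of_le (key ihp h4 iwp h5).symm
      (Finset.le_sup' (fun j => ∑ r ∈ Icc 1 (cx * ((hx + 2 * ph) * (wx + 2 * pw))),
        Wmp icx ihy iwy j r * ∑ q ∈ Icc 1 (cx * (hx * wx)), Wp r q * xt q) hjmem)
  · apply Finset.sup'_le
    intro j hj
    have hj' := mem_Icc.mp hj
    have hmulpos : 1 ≤ hp * wp := Nat.mul_pos hhp hwp
    obtain ⟨ihp, h4, iwp, h5, hjrow⟩ :
        ∃ ihp ∈ Icc 1 hp, ∃ iwp ∈ Icc 1 wp, j = mpRow wp ihp iwp := by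
      have hd : (j - 1) / wp < hp := by
        rw [Nat.div_lt_iff_lt_mul hwp]
        omega
      have hm : (j - 1) % wp < wp := Nat.mod_lt _ hwp
      refine ⟨(j - 1) / wp + 1, mem_Icc.mpr ⟨Nat.le_add_left 1 _, by omega⟩,
              (j - 1) % wp + 1, mem_Icc.mpr ⟨Nat.le_add_left 1 _, by omega⟩, ?_⟩
      unfold mpRow
      have hdm := Nat.div_add_mod (j - 1) wp
      have hmul : ((j - 1) / wp + 1 - 1) * wp = wp * ((j - 1) / wp) := by
        rw [Nat.add_sub_cancel, Nat.mul_comm]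
      omega
    have e := key ihp h4 iwp h5
    rw [← hjrow] at e
    exact le_of_eq_of_le e
      (Finset.le_sup' (fun q =>
        if 1 ≤ q.1 + (ihy - 1) * sh - ph ∧ q.1 + (ihy - 1) * sh - ph ≤ hx ∧
            1 ≤ q.2 + (iwy - 1) * sw - pw ∧ q.2 + (iwy - 1) * sw - pw ≤ wx then
          x icx (q.1 + (ihy - 1) * sh - ph) (q.2 + (iwy - 1) * sw - pw)
        else 0) (show (ihp, iwp) ∈ Icc 1 hp ×ˢ Icc 1 wp from
          Finset.mem_product.mpr ⟨h4, h5⟩))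
end

section
/- Let π_F be an ℓ-layer ReLU FFNN with weight matrices W^(k) ∈ ℝ^{n_k×n_{k−1}} and bias vectors v^(k) ∈ ℝ^{n_k} for k ∈ [ℓ], let Z ⊆ ℝ^{n_0} be an input set, and fix k ∈ [ℓ−1]. Let J = ∏_{j=1}^{n_k} [α_j, β_j] ⊆ ℝ^{n_k} be an interval that contains the k-th layer activation x^(k)(x) for every x ∈ Z, where x^(0)(x) = x and x^(i)(x) = σ(W^(i) x^(i−1)(x) + v^(i)) for i ∈ [ℓ−1]. Let N ⊆ [n_k] and N̄ = [n_k] \ N. Define the reduced network π̂_F with bias-error set as follows: it has the same layers as π_F except that layer k uses Ŵ^(k) = W^(k)_{[N̄,:]} (the rows of W^(k) indexed by N̄) and v̂^(k) = v^(k)_{[N̄]}, and layer k+1 uses Ŵ^(k+1) = W^(k+1)_{[:,N̄]} (the columns of W^(k+1) indexed by N̄) together with any bias of the form v^(k+1) + e with e ∈ ε, where ε = { W^(k+1)_{[:,N]} u : u ∈ ∏_{j∈N} [α_j, β_j] } ⊆ ℝ^{n_{k+1}}. Then for every x ∈ Z there exists e ∈ ε such that π_F(x) equals the output of the reduced network evaluated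 at x with bias v^(k+1) + e at layer k+1; that is, π_F(x) ∈ π̂_F(x) for all x ∈ Z. -/
open Finset

/-- Lemma 4 of the paper: neuron reduction with a compensating interval bias
over-approximates the original network.

An `ℓ`-layer ReLU FFNN is encoded with 1-based indexing: layer `kk ∈ [ℓ]` has `n kk`
neurons indexed by `Finset.Icc 1 (n kk)`, weights `W kk i j` and biases `v kk i`; the
input dimension is `n 0`.  The family `X kk x` gives the layer-`kk` activations of the
original network on input `x` (`X 0 x = x`, `X kk x = σ(W^(kk) X (kk-1) x + v^(kk))` for
`kk ∈ [ℓ−1]`), and `π_F(x) = W^(ℓ) X (ℓ-1) x + v^(ℓ)`.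

For a fixed layer `k ∈ [ℓ−1]`, an interval `J = ∏_j [α j, β j]` containing the layer-`k`
activations over the input set `Z`, and a set `N ⊆ [n k]` of reduced neurons with
complement `N̄`, the reduced network keeps only the rows of `W^(k)`, `v^(k)` indexed by
`N̄` and the columns of `W^(k+1)` indexed by `N̄` (encoded by restricting the index set of
layer `k` to `N̄` via `D`), and adds a bias perturbation `e ∈ ε` at layer `k+1`, where
`ε = { W^(k+1)_{[:,N]} u : u ∈ ∏_{j∈N} [α j, β j] }`; the family `Xr x e kk` gives its
activations. Then for every `x ∈ Z` there exists `e ∈ ε` such that `π_F(x)` equals the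
output of the reduced network with bias `v^(k+1) + e`, i.e. `π_F(x) ∈ π̂_F(x)`. -/
theorem neuron_reduction_overapprox
    (ℓ : ℕ) (hℓ : 1 ≤ ℓ)
    (n : ℕ → ℕ)
    (W : ℕ → ℕ → ℕ → ℝ) (v : ℕ → ℕ → ℝ)
    (Z : Set (ℕ → ℝ))
    -- original network activations
    (X : ℕ → (ℕ → ℝ) → ℕ → ℝ)
    (hX0 : ∀ x i, X 0 x i = x i)
    (hXrec : ∀ kk, 1 ≤ kk → kk ≤ ℓ - 1 → ∀ x, ∀ i ∈ Icc 1 (n kk),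
      X kk x i = max ((∑ j ∈ Icc 1 (n (kk - 1)), W kk i j * X (kk - 1) x j) + v kk i) 0)
    -- the reduced layer k ∈ [ℓ-1] and the interval bound J = ∏ [α j, β j]
    (k : ℕ) (hk1 : 1 ≤ k) (hk2 : k ≤ ℓ - 1)
    (α β : ℕ → ℝ)
    (hab : ∀ j ∈ Icc 1 (n k), α j ≤ β j)
    (hJ : ∀ x ∈ Z, ∀ j ∈ Icc 1 (n k), α j ≤ X k x j ∧ X k x j ≤ β j)
    -- reduced neurons N and remaining neurons N̄
    (N : Finset ℕ) (hN : N ⊆ Icc 1 (n k))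
    (Nbar : Finset ℕ) (hNbar : Nbar = Icc 1 (n k) \ N)
    -- index sets of the layers of the reduced network
    (D : ℕ → Finset ℕ) (hD : ∀ kk, D kk = if kk = k then Nbar else Icc 1 (n kk))
    -- reduced network activations (with bias perturbation e added at layer k+1)
    (Xr : (ℕ → ℝ) → (ℕ → ℝ) → ℕ → ℕ → ℝ)
    (hXr0 : ∀ x e i, Xr x e 0 i = x i)
    (hXrrec : ∀ x e kk, 1 ≤ kk → kk ≤ ℓ - 1 → ∀ i ∈ D kk,
      Xr x e kk i = max ((∑ j ∈ D (kk - 1), W kk i j * Xr x e (kk - 1) j) + v kk i +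
        (if kk = k + 1 then e i else 0)) 0)
    -- the bias error set ε = { W^(k+1)_{[:,N]} u : u ∈ ∏_{j∈N} [α j, β j] }
    (ε : Set (ℕ → ℝ))
    (hε : ε = {e | ∃ u : ℕ → ℝ, (∀ j ∈ N, α j ≤ u j ∧ u j ≤ β j) ∧
      ∀ i, e i = ∑ j ∈ N, W (k + 1) i j * u j}) :
    ∀ x ∈ Z, ∃ e ∈ ε, ∀ i ∈ Icc 1 (n ℓ),
      (∑ j ∈ Icc 1 (n (ℓ - 1)), W ℓ i j * X (ℓ - 1) x j) + v ℓ i =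
        (∑ j ∈ D (ℓ - 1), W ℓ i j * Xr x e (ℓ - 1) j) + v ℓ i +
          (if ℓ = k + 1 then e i else 0) := by
  intro x hx
  set e : ℕ → ℝ := fun i => ∑ j ∈ N, W (k + 1) i j * X k x j with he
  have heε : e ∈ ε := by
    rw [hε]
    exact ⟨X k x, fun j hj => hJ x hx j (hN hj), fun i => rfl⟩
  have hDsub : ∀ kk, D kk ⊆ Icc 1 (n kk) := by
    intro kk
    rw [hD]
    split
    · next h => subst h; rw [hNbar]; exact sdiff_subset
    · exact Finset.Subset.refl _
  have hDk : D k = Nbar := by simp [hD]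
  have hsplitgen : ∀ i, (∑ j ∈ Nbar, W (k+1) i j * X k x j) + ∑ j ∈ N, W (k+1) i j * X k x j
      = ∑ j ∈ Icc 1 (n k), W (k+1) i j * X k x j := by
    intro i; rw [hNbar]; exact Finset.sum_sdiff hN
  -- main claim: activations agree on D kk for kk ≤ ℓ - 1
  have claim : ∀ kk, kk ≤ ℓ - 1 → ∀ i ∈ D kk, Xr x e kk i = X kk x i := by
    intro kk
    induction kk with
    | zero => intro _ i _; rw [hXr0, hX0]
    | succ m ih =>
      intro hle i hi
      have h1 : 1 ≤ m + 1 := Nat.succ_le_succ (Nat.zero_le m)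
      have hiIcc : i ∈ Icc 1 (n (m+1)) := hDsub _ hi
      rw [hXrrec x e (m+1) h1 hle i hi, hXrec (m+1) h1 hle x i hiIcc]
      simp only [Nat.add_sub_cancel]
      have hsum : ∀ j ∈ D m, W (m+1) i j * Xr x e m j = W (m+1) i j * X m x j := by
        intro j hj
        rw [ih (by omega) j hj]
      rw [Finset.sum_congr rfl hsum]
      by_cases hcase : m + 1 = k + 1
      · have hm : m = k := Nat.succ_injective hcase
        subst hm
        simp only [hDk, he, eq_self_iff_true, if_true]
        rw [← hsplitgen i]
        ring
      · have hmk : m ≠ k := fun h => hcase (by rw [h])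
        rw [if_neg hcase, hD]
        simp [hmk]
  have hℓk : k + 1 ≤ ℓ := by omega
  refine ⟨e, heε, fun i _ => ?_⟩
  have hsum : ∀ j ∈ D (ℓ - 1), W ℓ i j * Xr x e (ℓ - 1) j = W ℓ i j * X (ℓ - 1) x j := by
    intro j hj
    rw [claim (ℓ - 1) (le_refl _) j hj]
  rw [Finset.sum_congr rfl hsum]
  by_cases hcase : ℓ = k + 1
  · subst hcase
    simp only [Nat.add_sub_cancel, eq_self_iff_true, if_true, hDk, he]
    rw [← hsplitgen i]
    ring
  · have hℓ1 : ℓ - 1 ≠ k := by omega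
    rw [if_neg hcase, hD]
    simp [hℓ1]
end

section
/- Let W ∈ ℝ^{m×n}, ρ ≥ 0, and for each j ∈ [n] let α_j ≤ β_j be reals. Define h_j = ( Σ_{i=1}^m |W_{[i,j]}| ) · (β_j − α_j) for j ∈ [n] and let N = { j ∈ [n] : h_j ≤ ρ }. Let ε = { W_{[:,N]} u : u ∈ ∏_{j∈N} [α_j, β_j] } ⊆ ℝ^m, and for each i ∈ [m] let ε̄_i = sup { e_i : e ∈ ε } and ε̲_i = inf { e_i : e ∈ ε }. Then Σ_{i=1}^m (ε̄_i − ε̲_i) ≤ ρ · |N|, where |N| is the cardinality of N. -/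
open scoped Classical

/-- The interval-valued bias error set
`ε = { W_{[:,N]} u : u ∈ ∏_{j∈N} [α_j, β_j] } ⊆ ℝᵐ`. -/
def errSet {m n : ℕ} (W : Matrix (Fin m) (Fin n) ℝ) (N : Finset (Fin n))
    (α β : Fin n → ℝ) : Set (Fin m → ℝ) :=
  {e | ∃ u : Fin n → ℝ, (∀ j ∈ N, α j ≤ u j ∧ u j ≤ β j) ∧
    e = fun i => ∑ j ∈ N, W i j * u j}

/-- with `h_j = (Σ_{i=1}^m |W_{[i,j]}|)·(β_j − α_j)` and
`N = {j ∈ [n] : h_j ≤ ρ}` (the neuron set selected by Algorithm 1), the error set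
`ε = { W_{[:,N]} u : u ∈ ∏_{j∈N} [α_j, β_j] }` satisfies
`Σ_{i=1}^m (ε̄_i − ε̲_i) ≤ ρ·|N|`. -/
theorem size_errSet_le {m n : ℕ} (W : Matrix (Fin m) (Fin n) ℝ) (ρ : ℝ) (hρ : 0 ≤ ρ)
    (α β : Fin n → ℝ) (hab : ∀ j, α j ≤ β j)
    (N : Finset (Fin n))
    (hN : N = Finset.univ.filter (fun j => (∑ i : Fin m, |W i j|) * (β j - α j) ≤ ρ)) :
    ∑ i : Fin m,
        (sSup ((fun e => e i) '' errSet W N α β) - sInf ((fun e => e i) '' errSet W N α β)) ≤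
      ρ * N.card := by
  have key : ∀ i : Fin m,
      sSup ((fun e => e i) '' errSet W N α β) - sInf ((fun e => e i) '' errSet W N α β)
        ≤ ∑ j ∈ N, |W i j| * (β j - α j) := by
    intro i
    set M : ℝ := ∑ j ∈ N, max (W i j * α j) (W i j * β j) with hM
    set L : ℝ := ∑ j ∈ N, min (W i j * α j) (W i j * β j) with hL
    have hne : ((fun e => e i) '' errSet W N α β).Nonempty := by
      refine ⟨(fun k => ∑ j ∈ N, W k j * α j) i, ⟨_, ⟨α, fun j _ => ⟨le_refl _, hab j⟩, rfl⟩, rfl⟩⟩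
    have hub : ∀ x ∈ (fun e => e i) '' errSet W N α β, x ≤ M := by
      rintro x ⟨e, ⟨u, hu, rfl⟩, rfl⟩
      refine Finset.sum_le_sum fun j hj => ?_
      rcases le_or_gt 0 (W i j) with h | h
      · exact le_trans (mul_le_mul_of_nonneg_left (hu j hj).2 h) (le_max_right _ _)
      · exact le_trans (mul_le_mul_of_nonpos_left (hu j hj).1 h.le) (le_max_left _ _)
    have hlb : ∀ x ∈ (fun e => e i) '' errSet W N α β, L ≤ x := by
      rintro x ⟨e, ⟨u, hu, rfl⟩, rfl⟩
      refine Finset.sum_le_sum fun j hj => ?_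
      rcases le_or_gt 0 (W i j) with h | h
      · exact le_trans (min_le_left _ _) (mul_le_mul_of_nonneg_left (hu j hj).1 h)
      · exact le_trans (min_le_right _ _) (mul_le_mul_of_nonpos_left (hu j hj).2 h.le)
    have h1 : sSup ((fun e => e i) '' errSet W N α β) ≤ M := csSup_le hne hub
    have h2 : L ≤ sInf ((fun e => e i) '' errSet W N α β) := le_csInf hne hlb
    have hML : M - L = ∑ j ∈ N, |W i j| * (β j - α j) := by
      rw [hM, hL, ← Finset.sum_sub_distrib]
      refine Finset.sum_congr rfl fun j hj => ?_
      rw [max_sub_min_eq_abs, ← mul_sub, abs_mul, abs_of_nonneg (sub_nonneg.2 (hab j))]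
    linarith
  calc ∑ i : Fin m,
        (sSup ((fun e => e i) '' errSet W N α β) - sInf ((fun e => e i) '' errSet W N α β))
      ≤ ∑ i : Fin m, ∑ j ∈ N, |W i j| * (β j - α j) := Finset.sum_le_sum fun i _ => key i
    _ = ∑ j ∈ N, (∑ i : Fin m, |W i j|) * (β j - α j) := by
        rw [Finset.sum_comm]
        exact Finset.sum_congr rfl fun j _ => (Finset.sum_mul _ _ _).symm
    _ ≤ ∑ _j ∈ N, ρ := Finset.sum_le_sum fun j hj => by
        rw [hN] at hj; exact (Finset.mem_filter.mp hj).2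
    _ = ρ * N.card := by rw [Finset.sum_const, nsmul_eq_mul, mul_comm]
end

section
/- Let Z ⊆ ℝ^{n_0} be a hybrid zonotope and let π_F be an ℓ-layer ReLU FFNN with weight matrices W^(k) ∈ ℝ^{n_k×n_{k−1}} and bias vectors v^(k) ∈ ℝ^{n_k} for k ∈ [ℓ]. Then the reachable set R_{π_F}(Z) = { π_F(x) : x ∈ Z } ⊆ ℝ^{n_ℓ} is a hybrid zonotope. -/
/-- A set `Z ⊆ ℝ^d` is a hybrid zonotope if it is of the form
`{Gᶜ ξᶜ + Gᵇ ξᵇ + c : ξᶜ ∈ [−1,1]^{n_g}, ξᵇ ∈ {−1,1}^{n_b}, Aᶜ ξᶜ + Aᵇ ξᵇ = b}`. -/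
def IsHybridZonotope {d : ℕ} (Z : Set (Fin d → ℝ)) : Prop :=
  ∃ (ng nb nc : ℕ) (c : Fin d → ℝ) (Gc : Matrix (Fin d) (Fin ng) ℝ)
    (Gb : Matrix (Fin d) (Fin nb) ℝ) (Ac : Matrix (Fin nc) (Fin ng) ℝ)
    (Ab : Matrix (Fin nc) (Fin nb) ℝ) (b : Fin nc → ℝ),
    Z = {z | ∃ (ξc : Fin ng → ℝ) (ξb : Fin nb → ℝ),
      (∀ i, |ξc i| ≤ 1) ∧ (∀ i, ξb i = -1 ∨ ξb i = 1) ∧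
      Ac.mulVec ξc + Ab.mulVec ξb = b ∧
      z = Gc.mulVec ξc + Gb.mulVec ξb + c}

/-- The hidden-layer activations of a ReLU feedforward network: `act n W v 0 x = x` and
`act n W v k x = σ(W^(k) · act n W v (k-1) x + v^(k))` for `k ≥ 1`, where `σ` is the
componentwise ReLU. -/
def act (n : ℕ → ℕ) (W : (k : ℕ) → Matrix (Fin (n k)) (Fin (n (k - 1))) ℝ)
    (v : (k : ℕ) → Fin (n k) → ℝ) : (k : ℕ) → (Fin (n 0) → ℝ) → (Fin (n k) → ℝ)
  | 0 => fun x => x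
  | (k + 1) => fun x i => max ((W (k + 1)).mulVec (act n W v k x) i + v (k + 1) i) 0

def IsHZ {d : ℕ} (Z : Set (Fin d → ℝ)) : Prop :=
  ∃ (ι κ γ : Type) (_ : Fintype ι) (_ : Fintype κ) (_ : Fintype γ)
    (c : Fin d → ℝ) (Gc : Fin d → ι → ℝ) (Gb : Fin d → κ → ℝ)
    (Ac : γ → ι → ℝ) (Ab : γ → κ → ℝ) (b : γ → ℝ),
    Z = {z | ∃ (ξc : ι → ℝ) (ξb : κ → ℝ),
      (∀ i, |ξc i| ≤ 1) ∧ (∀ i, ξb i = -1 ∨ ξb i = 1) ∧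
      (∀ r, (∑ j, Ac r j * ξc j) + (∑ j, Ab r j * ξb j) = b r) ∧
      (∀ i, z i = (∑ j, Gc i j * ξc j) + (∑ j, Gb i j * ξb j) + c i)}

theorem isHZ_of_isHybridZonotope {d : ℕ} {Z : Set (Fin d → ℝ)}
    (h : IsHybridZonotope Z) : IsHZ Z := by
  obtain ⟨ng, nb, nc, c, Gc, Gb, Ac, Ab, b, rfl⟩ := h
  refine ⟨Fin ng, Fin nb, Fin nc, inferInstance, inferInstance, inferInstance,
    c, Gc, Gb, Ac, Ab, b, ?_⟩
  ext z
  simp only [Set.mem_setOf_eq, Matrix.mulVec, dotProduct, funext_iff, Pi.add_apply]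

theorem isHybridZonotope_of_isHZ {d : ℕ} {Z : Set (Fin d → ℝ)}
    (h : IsHZ Z) : IsHybridZonotope Z := by
  obtain ⟨ι, κ, γ, hι, hκ, hγ, c, Gc, Gb, Ac, Ab, b, rfl⟩ := h
  classical
  let e1 := Fintype.equivFin ι
  let e2 := Fintype.equivFin κ
  let e3 := Fintype.equivFin γ
  refine ⟨Fintype.card ι, Fintype.card κ, Fintype.card γ, c,
    Matrix.of fun i j => Gc i (e1.symm j), Matrix.of fun i j => Gb i (e2.symm j),
    Matrix.of fun r j => Ac (e3.symm r) (e1.symm j),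
    Matrix.of fun r j => Ab (e3.symm r) (e2.symm j), fun r => b (e3.symm r), ?_⟩
  ext z
  simp only [Set.mem_setOf_eq, Matrix.mulVec, dotProduct, funext_iff, Pi.add_apply,
    Matrix.of_apply]
  constructor
  · rintro ⟨ξc, ξb, h1, h2, h3, h4⟩
    refine ⟨fun j => ξc (e1.symm j), fun j => ξb (e2.symm j),
      fun j => h1 _, fun j => h2 _, fun r => ?_, fun i => ?_⟩
    · rw [Equiv.sum_comp e1.symm (fun j => Ac (e3.symm r) j * ξc j),
        Equiv.sum_comp e2.symm (fun j => Ab (e3.symm r) j * ξb j)]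
      exact h3 _
    · rw [Equiv.sum_comp e1.symm (fun j => Gc i j * ξc j),
        Equiv.sum_comp e2.symm (fun j => Gb i j * ξb j)]
      exact h4 i
  · rintro ⟨ξc, ξb, h1, h2, h3, h4⟩
    refine ⟨fun j => ξc (e1 j), fun j => ξb (e2 j),
      fun j => h1 _, fun j => h2 _, fun r => ?_, fun i => ?_⟩
    · have := h3 (e3 r)
      rw [← Equiv.sum_comp e1 (fun j => Ac (e3.symm (e3 r)) (e1.symm j) * ξc j),
        ← Equiv.sum_comp e2 (fun j => Ab (e3.symm (e3 r)) (e2.symm j) * ξb j)] at this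
      simpa using this
    · have := h4 i
      rw [← Equiv.sum_comp e1 (fun j => Gc i (e1.symm j) * ξc j),
        ← Equiv.sum_comp e2 (fun j => Gb i (e2.symm j) * ξb j)] at this
      simpa using this

open Finset

lemma sum_ite_pair {α : Type} [Fintype α] [DecidableEq α] {k : ℕ} (i : α)
    (coef : Fin k → ℝ) (ξ : α × Fin k → ℝ) :
    ∑ p : α × Fin k, (if p.1 = i then coef p.2 else 0) * ξ p = ∑ t, coef t * ξ (i, t) := by
  rw [Fintype.sum_prod_type]
  rw [Finset.sum_eq_single i (fun a _ ha => by simp [ha]) (by simp)]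
  simp

lemma sum_ite_single {α : Type} [Fintype α] [DecidableEq α] (i : α) (co : ℝ) (ξ : α → ℝ) :
    ∑ i', (if i' = i then co else 0) * ξ i' = co * ξ i := by
  rw [Finset.sum_eq_single i (fun a _ ha => by simp [ha]) (by simp)]
  simp

lemma vec6_five {α : Type*} (a b c d e f : α) : ![a,b,c,d,e,f] 5 = f := rfl
lemma vec5_four {α : Type*} (a b c d e : α) : ![a,b,c,d,e] 4 = e := rfl

noncomputable def outC (M : ℝ) : Fin 6 → ℝ := ![M/4, M/4, 0, 0, 0, 0]
noncomputable def rowC (M : ℝ) : Fin 5 → Fin 6 → ℝ :=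
  ![![-(M/2), 0, 0, 0, 0, 0],
    ![1, -1, -1, -1, 0, 0],
    ![0, 0, 1, -1, 0, 0],
    ![1, 1, 0, 0, -1, -1],
    ![0, 0, 0, 0, 1, -1]]
noncomputable def rowB (M : ℝ) : Fin 5 → ℝ := ![-(M/2), 0, -1, 0, 1]

theorem isHZ_affine {d m : ℕ} {Z : Set (Fin d → ℝ)} (h : IsHZ Z)
    (W : Matrix (Fin m) (Fin d) ℝ) (v : Fin m → ℝ) :
    IsHZ {y | ∃ x ∈ Z, y = W.mulVec x + v} := by
  obtain ⟨ι, κ, γ, hι, hκ, hγ, c, Gc, Gb, Ac, Ab, b, rfl⟩ := h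
  refine ⟨ι, κ, γ, hι, hκ, hγ, fun i => (∑ k, W i k * c k) + v i,
    fun i j => ∑ k, W i k * Gc k j, fun i j => ∑ k, W i k * Gb k j, Ac, Ab, b, ?_⟩
  ext y
  simp only [Set.mem_setOf_eq]
  constructor
  · rintro ⟨x, ⟨ξc, ξb, h1, h2, h3, h4⟩, rfl⟩
    refine ⟨ξc, ξb, h1, h2, h3, fun i => ?_⟩
    simp only [Pi.add_apply, Matrix.mulVec, dotProduct]
    calc ∑ k, W i k * x k + v i
        = ∑ k, W i k * ((∑ j, Gc k j * ξc j) + (∑ j, Gb k j * ξb j) + c k) + v i := by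
          rw [Finset.sum_congr rfl fun k _ => by rw [h4 k]]
      _ = (∑ j, (∑ k, W i k * Gc k j) * ξc j) + (∑ j, (∑ k, W i k * Gb k j) * ξb j)
            + ((∑ k, W i k * c k) + v i) := by
          simp only [mul_add, Finset.sum_add_distrib, Finset.mul_sum, Finset.sum_mul]
          rw [Finset.sum_comm (f := fun k j => W i k * (Gc k j * ξc j)),
            Finset.sum_comm (f := fun k j => W i k * (Gb k j * ξb j))]
          simp only [Finset.sum_mul, mul_assoc]
          ring
  · rintro ⟨ξc, ξb, h1, h2, h3, h4⟩
    refine ⟨fun k => (∑ j, Gc k j * ξc j) + (∑ j, Gb k j * ξb j) + c k,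
      ⟨ξc, ξb, h1, h2, h3, fun i => rfl⟩, ?_⟩
    funext i
    rw [h4 i]
    simp only [Pi.add_apply, Matrix.mulVec, dotProduct]
    simp only [mul_add, Finset.sum_add_distrib, Finset.mul_sum, Finset.sum_mul]
    rw [Finset.sum_comm (f := fun k j => W i k * (Gc k j * ξc j)),
      Finset.sum_comm (f := fun k j => W i k * (Gb k j * ξb j))]
    simp only [Finset.sum_mul, mul_assoc]
    ring


theorem isHZ_relu {d : ℕ} {Z : Set (Fin d → ℝ)} (h : IsHZ Z) :
    IsHZ {y | ∃ x ∈ Z, y = fun i => max (x i) 0} := by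
  classical
  obtain ⟨ι, κ, γ, hι, hκ, hγ, c, Gc, Gb, Ac, Ab, b, rfl⟩ := h
  set M : ℝ := 1 + ∑ i, (|c i| + (∑ j, |Gc i j|) + (∑ j, |Gb i j|)) with hMdef
  have hM1 : 1 ≤ M := by
    have : (0:ℝ) ≤ ∑ i, (|c i| + (∑ j, |Gc i j|) + (∑ j, |Gb i j|)) := by positivity
    linarith
  have hM0 : 0 < M := by linarith
  have hMne : M ≠ 0 := ne_of_gt hM0
  have hbound : ∀ (ξc : ι → ℝ) (ξb : κ → ℝ), (∀ i, |ξc i| ≤ 1) → (∀ i, ξb i = -1 ∨ ξb i = 1) →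
      ∀ i, |(∑ j, Gc i j * ξc j) + (∑ j, Gb i j * ξb j) + c i| ≤ M - 1 := by
    intro ξc ξb h1 h2 i
    have e1 : |∑ j, Gc i j * ξc j| ≤ ∑ j, |Gc i j| := by
      refine (Finset.abs_sum_le_sum_abs _ _).trans (Finset.sum_le_sum fun j _ => ?_)
      rw [abs_mul]
      calc |Gc i j| * |ξc j| ≤ |Gc i j| * 1 :=
            mul_le_mul_of_nonneg_left (h1 j) (abs_nonneg _)
        _ = |Gc i j| := mul_one _
    have e2 : |∑ j, Gb i j * ξb j| ≤ ∑ j, |Gb i j| := by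
      refine (Finset.abs_sum_le_sum_abs _ _).trans (Finset.sum_le_sum fun j _ => ?_)
      rw [abs_mul]
      have : |ξb j| ≤ 1 := by rcases h2 j with h | h <;> rw [h] <;> norm_num
      calc |Gb i j| * |ξb j| ≤ |Gb i j| * 1 :=
            mul_le_mul_of_nonneg_left this (abs_nonneg _)
        _ = |Gb i j| := mul_one _
    have e3 : |c i| + (∑ j, |Gc i j|) + (∑ j, |Gb i j|)
        ≤ ∑ i', (|c i'| + (∑ j, |Gc i' j|) + (∑ j, |Gb i' j|)) :=
      Finset.single_le_sum (f := fun i' => |c i'| + (∑ j, |Gc i' j|) + (∑ j, |Gb i' j|))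
        (fun i' _ => by positivity) (Finset.mem_univ i)
    calc |(∑ j, Gc i j * ξc j) + (∑ j, Gb i j * ξb j) + c i|
        ≤ |(∑ j, Gc i j * ξc j) + (∑ j, Gb i j * ξb j)| + |c i| := abs_add_le _ _
      _ ≤ |∑ j, Gc i j * ξc j| + |∑ j, Gb i j * ξb j| + |c i| := by
          have := abs_add_le (∑ j, Gc i j * ξc j) (∑ j, Gb i j * ξb j); linarith
      _ ≤ M - 1 := by rw [hMdef]; linarith
  refine ⟨ι ⊕ (Fin d × Fin 6), κ ⊕ Fin d, γ ⊕ (Fin d × Fin 5),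
    inferInstance, inferInstance, inferInstance,
    fun _ => M/4,
    fun i => Sum.elim (fun _ => 0) (fun p => if p.1 = i then outC M p.2 else 0),
    fun i => Sum.elim (fun _ => 0) (fun i' => if i' = i then M/4 else 0),
    Sum.elim (fun r => Sum.elim (fun j => Ac r j) (fun _ => 0))
      (fun p => Sum.elim (fun j => if p.2 = 0 then Gc p.1 j else 0)
        (fun q => if q.1 = p.1 then rowC M p.2 q.2 else 0)),
    Sum.elim (fun r => Sum.elim (fun j => Ab r j) (fun _ => 0))
      (fun p => Sum.elim (fun j => if p.2 = 0 then Gb p.1 j else 0)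
        (fun i' => if i' = p.1 then rowB M p.2 else 0)),
    Sum.elim b (fun p => ![-(c p.1), 0, 1, 0, 1] p.2), ?_⟩
  ext y
  simp only [Set.mem_setOf_eq]
  constructor
  · -- forward
    rintro ⟨x, ⟨ξc, ξb, h1, h2, h3, h4⟩, rfl⟩
    set β : Fin d → ℝ := fun i => if 0 ≤ x i then 1 else -1 with hβ
    set ξ1 : Fin d → ℝ := fun i => 2 * x i / M - β i with hξ1
    set ξ2 : Fin d → ℝ := fun i => β i * ξ1 i with hξ2
    set ex : Fin d → Fin 6 → ℝ := fun i =>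
      ![ξ1 i, ξ2 i, if 0 ≤ x i then 1 else ξ1 i, if 0 ≤ x i then -1 else ξ1 i,
        if 0 ≤ x i then ξ1 i else 1, if 0 ≤ x i then ξ1 i else -1] with hex
    have hβi : ∀ i, β i = if 0 ≤ x i then 1 else -1 := fun _ => rfl
    have hξ1i : ∀ i, ξ1 i = 2 * x i / M - β i := fun _ => rfl
    have hξ2i : ∀ i, ξ2 i = β i * ξ1 i := fun _ => rfl
    have hxb : ∀ i, |x i| ≤ M - 1 := by
      intro i; rw [h4 i]; exact hbound ξc ξb h1 h2 i
    have hξ1b : ∀ i, |ξ1 i| ≤ 1 := by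
      intro i
      have hx2 := abs_le.mp (hxb i)
      have hd1 : 2 * x i / M ≤ 2 := by rw [div_le_iff₀ hM0]; nlinarith [hx2.2]
      have hd2 : -2 ≤ 2 * x i / M := by rw [le_div_iff₀ hM0]; nlinarith [hx2.1]
      rw [hξ1i i, hβi i]
      by_cases hx : 0 ≤ x i <;> simp only [hx, if_true, if_false] <;> rw [abs_le] <;> constructor
      · have : 0 ≤ 2 * x i / M := div_nonneg (by linarith) hM0.le
        linarith
      · linarith
      · linarith
      · have : 2 * x i / M ≤ 0 :=
          div_nonpos_of_nonpos_of_nonneg (by nlinarith [not_le.mp hx]) hM0.le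
        linarith
    have hb2 : ∀ i, |ξ2 i| ≤ 1 := by
      intro i
      rw [hξ2i i, abs_mul, hβi i]
      by_cases hx : 0 ≤ x i <;>
        simp only [hx, if_true, if_false, abs_one, abs_neg, one_mul] <;> exact hξ1b i
    have hMξ1 : ∀ i, M * ξ1 i = 2 * x i - M * β i := by
      intro i; rw [hξ1i i]; field_simp
    refine ⟨Sum.elim ξc (fun p => ex p.1 p.2), Sum.elim ξb β, ?_, ?_, ?_, ?_⟩
    · rintro (j | ⟨i, t⟩)
      · exact h1 j
      · simp only [Sum.elim_inr]
        fin_cases t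
        · simpa [hex] using hξ1b i
        · simpa [hex] using hb2 i
        · by_cases hx : 0 ≤ x i <;> simp [hex, hx] <;> exact hξ1b i
        · by_cases hx : 0 ≤ x i <;> simp [hex, hx] <;> exact hξ1b i
        · by_cases hx : 0 ≤ x i <;> simp [hex, hx] <;> exact hξ1b i
        · by_cases hx : 0 ≤ x i <;> simp [hex, vec6_five, hx] <;> exact hξ1b i
    · rintro (j | i)
      · exact h2 j
      · simp only [Sum.elim_inr, hβi i]
        by_cases hx : 0 ≤ x i <;> simp [hx]
    · rintro (r | ⟨i, t⟩)
      · simp only [Sum.elim_inl, Fintype.sum_sum_type, Sum.elim_inr]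
        simpa using h3 r
      · simp only [Sum.elim_inl, Sum.elim_inr, Fintype.sum_sum_type]
        rw [sum_ite_pair i (rowC M t) (fun p => ex p.1 p.2),
          sum_ite_single i (rowB M t) β]
        fin_cases t
        · -- link row
          simp [rowC, rowB, hex, vec6_five, Fin.sum_univ_six]
          have hx4 := h4 i
          linear_combination (-1 : ℝ) * hx4 - (1/2 : ℝ) * hMξ1 i
        · simp [rowC, rowB, hex, vec6_five, Fin.sum_univ_six, hξ2i, hβi]
          by_cases hx : 0 ≤ x i <;> simp [hx] <;> ring
        · simp [rowC, rowB, hex, vec6_five, Fin.sum_univ_six, hξ2i, hβi]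
          by_cases hx : 0 ≤ x i <;> simp [hx] <;> ring
        · simp [rowC, rowB, hex, vec6_five, Fin.sum_univ_six, hξ2i, hβi]
          by_cases hx : 0 ≤ x i <;> simp [hx] <;> ring
        · simp [rowC, rowB, hex, vec6_five, Fin.sum_univ_six, hξ2i, hβi]
          by_cases hx : 0 ≤ x i <;> simp [hx] <;> ring
    · intro i
      simp only [Fintype.sum_sum_type, Sum.elim_inl, Sum.elim_inr, zero_mul,
        Finset.sum_const_zero, zero_add]
      rw [sum_ite_pair i (outC M) (fun p => ex p.1 p.2),
        sum_ite_single i (M/4) β]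
      simp [outC, Fin.sum_univ_six, hex, vec6_five]
      rw [hξ2i i, hβi i]
      by_cases hx : 0 ≤ x i <;> simp only [hx, if_true, if_false]
      · rw [max_eq_left hx]
        have hβ1 : β i = 1 := by rw [hβi i]; simp [hx]
        linear_combination (-(1:ℝ)/2) * hMξ1 i + (M/2) * hβ1
      · rw [max_eq_right (le_of_lt (not_le.mp hx))]; ring
  · -- backward
    rintro ⟨ξc', ξb', h1, h2, h3, h4⟩
    set x : Fin d → ℝ := fun i => M/2 * ξc' (Sum.inr (i, 0)) + M/2 * ξb' (Sum.inr i) with hx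
    have hxi : ∀ i, x i = M/2 * ξc' (Sum.inr (i, 0)) + M/2 * ξb' (Sum.inr i) := fun _ => rfl
    have hrow : ∀ (i : Fin d) (t : Fin 5),
        (∑ j, (if t = 0 then Gc i j else 0) * ξc' (Sum.inl j))
          + (∑ s, rowC M t s * ξc' (Sum.inr (i, s)))
          + ((∑ j, (if t = 0 then Gb i j else 0) * ξb' (Sum.inl j))
            + rowB M t * ξb' (Sum.inr i))
        = ![-(c i), 0, 1, 0, 1] t := by
      intro i t
      have := h3 (Sum.inr (i, t))
      simp only [Sum.elim_inl, Sum.elim_inr, Fintype.sum_sum_type] at this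
      rw [sum_ite_pair i (rowC M t) (fun p => ξc' (Sum.inr p)),
        sum_ite_single i (rowB M t) (fun i' => ξb' (Sum.inr i'))] at this
      linarith [this]
    have hxmem : ∀ i, x i =
        (∑ j, Gc i j * ξc' (Sum.inl j)) + (∑ j, Gb i j * ξb' (Sum.inl j)) + c i := by
      intro i
      have h0 := hrow i 0
      simp [rowC, rowB, vec6_five, Fin.sum_univ_six] at h0
      rw [hxi i]
      linarith
    refine ⟨x, ⟨fun j => ξc' (Sum.inl j), fun j => ξb' (Sum.inl j),
      fun j => h1 _, fun j => h2 _, fun r => ?_, hxmem⟩, ?_⟩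
    · have := h3 (Sum.inl r)
      simp only [Sum.elim_inl, Sum.elim_inr, Fintype.sum_sum_type, zero_mul,
        Finset.sum_const_zero, add_zero] at this
      exact this
    · funext i
      have hy := h4 i
      simp only [Fintype.sum_sum_type, Sum.elim_inl, Sum.elim_inr, zero_mul,
        Finset.sum_const_zero, zero_add] at hy
      rw [sum_ite_pair i (outC M) (fun p => ξc' (Sum.inr p)),
        sum_ite_single i (M/4) (fun i' => ξb' (Sum.inr i'))] at hy
      simp [outC, Fin.sum_univ_six, vec6_five] at hy
      have r1 := hrow i 1
      have r2 := hrow i 2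
      have r3 := hrow i 3
      have r4 := hrow i 4
      simp [rowC, rowB, vec6_five, Fin.sum_univ_six] at r1 r2 r3 r4
      have b1 := abs_le.mp (h1 (Sum.inr (i, 2)))
      have b2 := abs_le.mp (h1 (Sum.inr (i, 3)))
      have b3 := abs_le.mp (h1 (Sum.inr (i, 4)))
      have b4 := abs_le.mp (h1 (Sum.inr (i, 5)))
      have ba1 := abs_le.mp (h1 (Sum.inr (i, 0)))
      rcases h2 (Sum.inr i) with hb | hb
      · -- β = -1
        rw [hb] at r4
        have hs3v : ξc' (Sum.inr (i, 4)) = 1 := by linarith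
        have hs4v : ξc' (Sum.inr (i, 5)) = -1 := by linarith
        have ha2v : ξc' (Sum.inr (i, 1)) = -ξc' (Sum.inr (i, 0)) := by
          rw [hs3v, hs4v] at r3; linarith
        rw [hb, ha2v] at hy
        have hx0 : x i ≤ 0 := by
          rw [hxi i, hb]; nlinarith [ba1.2]
        rw [max_eq_right hx0, hy]; ring
      · -- β = 1
        rw [hb] at r2
        have hs1v : ξc' (Sum.inr (i, 2)) = 1 := by linarith
        have hs2v : ξc' (Sum.inr (i, 3)) = -1 := by linarith
        have ha2v : ξc' (Sum.inr (i, 1)) = ξc' (Sum.inr (i, 0)) := by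
          rw [hs1v, hs2v] at r1; linarith
        have hx0 : 0 ≤ x i := by
          rw [hxi i, hb]; nlinarith [ba1.1]
        rw [max_eq_left hx0, hy, ha2v, hxi i, hb]
        ring

theorem act_image_isHZ (n : ℕ → ℕ)
    (W : (k : ℕ) → Matrix (Fin (n k)) (Fin (n (k - 1))) ℝ)
    (v : (k : ℕ) → Fin (n k) → ℝ) (Z : Set (Fin (n 0) → ℝ)) (hZ : IsHZ Z) :
    ∀ k, IsHZ {a : Fin (n k) → ℝ | ∃ x ∈ Z, a = act n W v k x} := by
  intro k
  induction k with
  | zero =>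
      have : {a : Fin (n 0) → ℝ | ∃ x ∈ Z, a = act n W v 0 x} = Z := by
        ext a
        constructor
        · rintro ⟨x, hx, rfl⟩; exact hx
        · intro ha; exact ⟨a, ha, rfl⟩
      rwa [this]
  | succ k ih =>
      have key : {a : Fin (n (k+1)) → ℝ | ∃ x ∈ Z, a = act n W v (k+1) x}
          = {y | ∃ u ∈ {u : Fin (n (k+1)) → ℝ |
              ∃ a ∈ {a : Fin (n k) → ℝ | ∃ x ∈ Z, a = act n W v k x},
              u = (W (k+1)).mulVec a + v (k+1)}, y = fun i => max (u i) 0} := by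
        ext y
        constructor
        · rintro ⟨x, hx, rfl⟩
          exact ⟨(W (k+1)).mulVec (act n W v k x) + v (k+1),
            ⟨act n W v k x, ⟨x, hx, rfl⟩, rfl⟩, rfl⟩
        · rintro ⟨u, ⟨a, ⟨x, hx, rfl⟩, rfl⟩, rfl⟩
          exact ⟨x, hx, rfl⟩
      rw [key]
      exact isHZ_relu (isHZ_affine ih (W (k+1)) (v (k+1)))


/-- for an `ℓ`-layer ReLU FFNN `π_F(x) = W^(ℓ) x^(ℓ−1) + v^(ℓ)` and a hybrid
zonotope input set `Z ⊆ ℝ^{n_0}`, the exact reachable set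
`R_{π_F}(Z) = {π_F(x) : x ∈ Z} ⊆ ℝ^{n_ℓ}` is a hybrid zonotope. -/
theorem reachSet_isHybridZonotope (n : ℕ → ℕ) (ℓ : ℕ) (hℓ : 1 ≤ ℓ)
    (W : (k : ℕ) → Matrix (Fin (n k)) (Fin (n (k - 1))) ℝ)
    (v : (k : ℕ) → Fin (n k) → ℝ)
    (Z : Set (Fin (n 0) → ℝ)) (hZ : IsHybridZonotope Z) :
    IsHybridZonotope
      {y : Fin (n ℓ) → ℝ | ∃ x ∈ Z, y = (W ℓ).mulVec (act n W v (ℓ - 1) x) + v ℓ} := by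
  have h1 : IsHZ {a : Fin (n (ℓ - 1)) → ℝ | ∃ x ∈ Z, a = act n W v (ℓ - 1) x} :=
    act_image_isHZ n W v Z (isHZ_of_isHybridZonotope hZ) (ℓ - 1)
  have h2 := isHZ_affine h1 (W ℓ) (v ℓ)
  have key : {y : Fin (n ℓ) → ℝ | ∃ x ∈ Z, y = (W ℓ).mulVec (act n W v (ℓ - 1) x) + v ℓ}
      = {y | ∃ u ∈ {a : Fin (n (ℓ - 1)) → ℝ | ∃ x ∈ Z, a = act n W v (ℓ - 1) x},
          y = (W ℓ).mulVec u + v ℓ} := by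
    ext y
    constructor
    · rintro ⟨x, hx, rfl⟩
      exact ⟨act n W v (ℓ - 1) x, ⟨x, hx, rfl⟩, rfl⟩
    · rintro ⟨u, ⟨x, hx, rfl⟩, rfl⟩
      exact ⟨x, hx, rfl⟩
  rw [key]
  exact isHybridZonotope_of_isHZ h2
end

section
/- Let Z₁ ⊆ ℝ^n and Z₂ ⊆ ℝ^m be hybrid zonotopes and let R ∈ ℝ^{m×n}. Then the generalized intersection Z₁ ∩_R Z₂ = { z ∈ Z₁ : R z ∈ Z₂ } is a hybrid zonotope. -/
private lemma dot_append {a b : ℕ} (r1 : Fin a → ℝ) (r2 : Fin b → ℝ) (v : Fin (a + b) → ℝ) :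
    dotProduct (Fin.append r1 r2) v =
      dotProduct r1 (fun j => v (Fin.castAdd b j)) +
      dotProduct r2 (fun j => v (Fin.natAdd a j)) := by
  simp [dotProduct, Fin.sum_univ_add, Fin.append_left, Fin.append_right]

/-- Hybrid zonotopes are closed under generalized intersection: if `Z₁ ⊆ ℝⁿ`
and `Z₂ ⊆ ℝᵐ` are hybrid zonotopes and `R ∈ ℝ^{m×n}`, then
`Z₁ ∩_R Z₂ = {z ∈ Z₁ : R z ∈ Z₂}` is a hybrid zonotope. -/
theorem isHybridZonotope_generalizedInter {n m : ℕ} (Z₁ : Set (Fin n → ℝ))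
    (Z₂ : Set (Fin m → ℝ)) (hZ₁ : IsHybridZonotope Z₁) (hZ₂ : IsHybridZonotope Z₂)
    (R : Matrix (Fin m) (Fin n) ℝ) :
    IsHybridZonotope {z : Fin n → ℝ | z ∈ Z₁ ∧ R.mulVec z ∈ Z₂} := by
  obtain ⟨g1, p1, q1, c1, Gc1, Gb1, Ac1, Ab1, b1, h1⟩ := hZ₁
  obtain ⟨g2, p2, q2, c2, Gc2, Gb2, Ac2, Ab2, b2, h2⟩ := hZ₂
  refine ⟨g1 + g2, p1 + p2, q1 + (q2 + m), c1,
    Matrix.of fun i => Fin.append (Gc1 i) (0 : Fin g2 → ℝ),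
    Matrix.of fun i => Fin.append (Gb1 i) (0 : Fin p2 → ℝ),
    Matrix.of (Fin.addCases (fun i => Fin.append (Ac1 i) (0 : Fin g2 → ℝ))
      (Fin.addCases (fun i => Fin.append (0 : Fin g1 → ℝ) (Ac2 i))
        (fun i => Fin.append ((R * Gc1) i) (-(Gc2 i))))),
    Matrix.of (Fin.addCases (fun i => Fin.append (Ab1 i) (0 : Fin p2 → ℝ))
      (Fin.addCases (fun i => Fin.append (0 : Fin p1 → ℝ) (Ab2 i))
        (fun i => Fin.append ((R * Gb1) i) (-(Gb2 i))))),
    Fin.append b1 (Fin.append b2 (c2 - R.mulVec c1)), ?_⟩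
  subst h1 h2
  ext z
  simp only [Set.mem_setOf_eq]
  constructor
  · rintro ⟨⟨u1, v1, hu1, hv1, he1, hz1⟩, u2, v2, hu2, hv2, he2, hz2⟩
    refine ⟨Fin.append u1 u2, Fin.append v1 v2, ?_, ?_, ?_, ?_⟩
    · intro i
      refine Fin.addCases (fun j => ?_) (fun j => ?_) i
      · rw [Fin.append_left]; exact hu1 j
      · rw [Fin.append_right]; exact hu2 j
    · intro i
      refine Fin.addCases (fun j => ?_) (fun j => ?_) i
      · rw [Fin.append_left]; exact hv1 j
      · rw [Fin.append_right]; exact hv2 j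
    · funext i
      refine Fin.addCases (fun j => ?_) (fun j => ?_) i
      · simpa [Matrix.mulVec, Fin.addCases_left, dot_append, Fin.append_left,
          Fin.append_right, zero_dotProduct] using congrFun he1 j
      · refine Fin.addCases (fun k => ?_) (fun k => ?_) j
        · simpa [Matrix.mulVec, Fin.addCases_left, Fin.addCases_right, dot_append,
            Fin.append_left, Fin.append_right, zero_dotProduct] using congrFun he2 k
        · have hR : R.mulVec (Gc1.mulVec u1 + Gb1.mulVec v1 + c1) =
              Gc2.mulVec u2 + Gb2.mulVec v2 + c2 := by rw [← hz1]; exact hz2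
          have hRk := congrFun hR k
          simp only [Matrix.mulVec_add, Pi.add_apply] at hRk
          simp only [Matrix.mulVec, Matrix.of_apply, Fin.addCases_right, Pi.add_apply,
            dot_append, neg_dotProduct, Fin.append_left, Fin.append_right,
            Fin.append_right, Pi.sub_apply]
          have h1 : dotProduct ((R * Gc1) k) u1 = R.mulVec (Gc1.mulVec u1) k := by
            rw [Matrix.mulVec_mulVec]; rfl
          have h2 : dotProduct ((R * Gb1) k) v1 = R.mulVec (Gb1.mulVec v1) k := by
            rw [Matrix.mulVec_mulVec]; rfl
          have h3 : dotProduct (Gc2 k) u2 = Gc2.mulVec u2 k := rfl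
          have h4 : dotProduct (Gb2 k) v2 = Gb2.mulVec v2 k := rfl
          rw [h1, h2, h3, h4]
          have hc : dotProduct (fun j => R k j) c1 = R.mulVec c1 k := rfl
          rw [hc]
          linarith [hRk]
    · funext i
      simp only [Matrix.mulVec, Matrix.of_apply, Pi.add_apply, dot_append,
        Fin.append_left, Fin.append_right, zero_dotProduct]
      have := congrFun hz1 i
      simp only [Pi.add_apply, Matrix.mulVec] at this
      linarith
  · rintro ⟨u, v, hu, hv, he, hz⟩
    set u1 : Fin g1 → ℝ := fun j => u (Fin.castAdd g2 j) with hu1def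
    set u2 : Fin g2 → ℝ := fun j => u (Fin.natAdd g1 j) with hu2def
    set v1 : Fin p1 → ℝ := fun j => v (Fin.castAdd p2 j) with hv1def
    set v2 : Fin p2 → ℝ := fun j => v (Fin.natAdd p1 j) with hv2def
    have hz1 : z = Gc1.mulVec u1 + Gb1.mulVec v1 + c1 := by
      funext i
      have := congrFun hz i
      simpa [Matrix.mulVec, dot_append, zero_dotProduct] using this
    have he1 : Ac1.mulVec u1 + Ab1.mulVec v1 = b1 := by
      funext i
      have := congrFun he (Fin.castAdd (q2 + m) i)
      simpa [Matrix.mulVec, Fin.addCases_left, dot_append, Fin.append_left,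
        zero_dotProduct] using this
    have he2 : Ac2.mulVec u2 + Ab2.mulVec v2 = b2 := by
      funext i
      have := congrFun he (Fin.natAdd q1 (Fin.castAdd m i))
      simpa [Matrix.mulVec, Fin.addCases_left, Fin.addCases_right, dot_append,
        Fin.append_left, Fin.append_right, zero_dotProduct] using this
    have hz2 : R.mulVec z = Gc2.mulVec u2 + Gb2.mulVec v2 + c2 := by
      funext i
      have hrow := congrFun he (Fin.natAdd q1 (Fin.natAdd q2 i))
      simp only [Matrix.mulVec, Matrix.of_apply, Fin.addCases_right, Pi.add_apply,
        dot_append, neg_dotProduct, Fin.append_left, Fin.append_right,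
        Pi.sub_apply] at hrow
      have hRz : R.mulVec z i = R.mulVec (Gc1.mulVec u1) i + R.mulVec (Gb1.mulVec v1) i
          + R.mulVec c1 i := by
        rw [hz1]; simp [Matrix.mulVec_add]
      have ha : dotProduct ((R * Gc1) i) u1 = R.mulVec (Gc1.mulVec u1) i := by
        rw [Matrix.mulVec_mulVec]; rfl
      have hb : dotProduct ((R * Gb1) i) v1 = R.mulVec (Gb1.mulVec v1) i := by
        rw [Matrix.mulVec_mulVec]; rfl
      rw [ha, hb] at hrow
      simp only [Pi.add_apply]
      have h3 : dotProduct (Gc2 i) u2 = Gc2.mulVec u2 i := rfl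
      have h4 : dotProduct (Gb2 i) v2 = Gb2.mulVec v2 i := rfl
      rw [h3, h4] at hrow
      have hc : dotProduct (fun j => R i j) c1 = R.mulVec c1 i := rfl
      rw [hc] at hrow
      linarith
    exact ⟨⟨u1, v1, fun j => hu _, fun j => hv _, he1, hz1⟩,
      u2, v2, fun j => hu _, fun j => hv _, he2, hz2⟩
end

section
/- Let Z₁ ⊆ ℝ^n and Z₂ ⊆ ℝ^n be hybrid zonotopes. Then their union Z₁ ∪ Z₂ ⊆ ℝ^n is a hybrid zonotope. -/
/-- Any set of hybrid-zonotope form with arbitrary finite index types is a hybrid zonotope. -/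
lemma aux_reindex {d : ℕ} {ιg ιb ιc : Type} [Fintype ιg] [Fintype ιb] [Fintype ιc]
    (c : Fin d → ℝ) (Gc : Matrix (Fin d) ιg ℝ) (Gb : Matrix (Fin d) ιb ℝ)
    (Ac : Matrix ιc ιg ℝ) (Ab : Matrix ιc ιb ℝ) (b : ιc → ℝ) :
    IsHybridZonotope {z | ∃ (ξc : ιg → ℝ) (ξb : ιb → ℝ),
      (∀ i, |ξc i| ≤ 1) ∧ (∀ i, ξb i = -1 ∨ ξb i = 1) ∧
      Ac.mulVec ξc + Ab.mulVec ξb = b ∧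
      z = Gc.mulVec ξc + Gb.mulVec ξb + c} := by
  obtain ⟨eg⟩ : Nonempty (Fin (Fintype.card ιg) ≃ ιg) := ⟨(Fintype.equivFin ιg).symm⟩
  obtain ⟨eb⟩ : Nonempty (Fin (Fintype.card ιb) ≃ ιb) := ⟨(Fintype.equivFin ιb).symm⟩
  obtain ⟨ec⟩ : Nonempty (Fin (Fintype.card ιc) ≃ ιc) := ⟨(Fintype.equivFin ιc).symm⟩
  refine ⟨_, _, _, c, Gc.submatrix id eg, Gb.submatrix id eb, Ac.submatrix ec eg,
    Ab.submatrix ec eb, b ∘ ec, ?_⟩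
  ext z
  simp only [Set.mem_setOf_eq]
  constructor
  · rintro ⟨ξc, ξb, h1, h2, h3, h4⟩
    refine ⟨ξc ∘ eg, ξb ∘ eb, fun i => h1 _, fun i => h2 _, ?_, ?_⟩
    · rw [Matrix.submatrix_mulVec_equiv, Matrix.submatrix_mulVec_equiv]
      funext i
      simpa [Function.comp_def] using congrFun h3 (ec i)
    · rw [Matrix.submatrix_mulVec_equiv, Matrix.submatrix_mulVec_equiv]
      funext i
      simpa [Function.comp_def] using congrFun h4 i
  · rintro ⟨ξc, ξb, h1, h2, h3, h4⟩
    refine ⟨ξc ∘ eg.symm, ξb ∘ eb.symm, fun i => h1 _, fun i => h2 _, ?_, ?_⟩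
    · rw [Matrix.submatrix_mulVec_equiv, Matrix.submatrix_mulVec_equiv] at h3
      funext i
      simpa [Function.comp_def] using congrFun h3 (ec.symm i)
    · rw [Matrix.submatrix_mulVec_equiv, Matrix.submatrix_mulVec_equiv] at h4
      funext i
      simpa [Function.comp_def] using congrFun h4 i

section UnionConstruction

variable {n g1 b1 k1 g2 b2 k2 : ℕ}
variable (c1 : Fin n → ℝ) (G1c : Matrix (Fin n) (Fin g1) ℝ) (G1b : Matrix (Fin n) (Fin b1) ℝ)
variable (A1c : Matrix (Fin k1) (Fin g1) ℝ) (A1b : Matrix (Fin k1) (Fin b1) ℝ) (bv1 : Fin k1 → ℝ)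
variable (c2 : Fin n → ℝ) (G2c : Matrix (Fin n) (Fin g2) ℝ) (G2b : Matrix (Fin n) (Fin b2) ℝ)
variable (A2c : Matrix (Fin k2) (Fin g2) ℝ) (A2b : Matrix (Fin k2) (Fin b2) ℝ) (bv2 : Fin k2 → ℝ)

/-- Continuous-generator index type for the union construction:
originals of both zonotopes, plus one slack per continuous/binary generator of each. -/
abbrev UIg := (Fin g1 ⊕ Fin g2) ⊕ ((Fin g1 ⊕ Fin b1) ⊕ (Fin g2 ⊕ Fin b2))
/-- Binary-generator index type: originals plus one switching variable `σ`. -/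
abbrev UIb := (Fin b1 ⊕ Fin b2) ⊕ Unit
/-- Constraint index type: original constraints of both zonotopes plus forcing constraints. -/
abbrev UIc := (Fin k1 ⊕ Fin k2) ⊕ ((Fin g1 ⊕ Fin b1) ⊕ (Fin g2 ⊕ Fin b2))

def UGc : Matrix (Fin n) (UIg (g1 := g1) (g2 := g2) (b1 := b1) (b2 := b2)) ℝ :=
  fun i => Sum.elim (Sum.elim (G1c i) (G2c i)) (fun _ => 0)

noncomputable def UGb : Matrix (Fin n) (UIb (b1 := b1) (b2 := b2)) ℝ :=
  fun i => Sum.elim (Sum.elim (G1b i) (G2b i))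
    (fun _ => ((c1 i - c2 i) + ((∑ j, G2c i j) + (∑ j, G2b i j)
      - (∑ j, G1c i j) - (∑ j, G1b i j))) / 2)

noncomputable def Uc : Fin n → ℝ := fun i =>
  ((c1 i + c2 i) + ((∑ j, G1c i j) + (∑ j, G1b i j) + (∑ j, G2c i j) + (∑ j, G2b i j))) / 2

def UAc : Matrix (UIc (g1 := g1) (b1 := b1) (k1 := k1) (g2 := g2) (b2 := b2) (k2 := k2))
    (UIg (g1 := g1) (g2 := g2) (b1 := b1) (b2 := b2)) ℝ :=
  Sum.elim
    (Sum.elim (fun r => Sum.elim (Sum.elim (A1c r) (fun _ => 0)) (fun _ => 0))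
              (fun r => Sum.elim (Sum.elim (fun _ => 0) (A2c r)) (fun _ => 0)))
    (Sum.elim
      (Sum.elim
        (fun j => Sum.elim (Sum.elim (fun k => if k = j then 1 else 0) (fun _ => 0))
          (Sum.elim (Sum.elim (fun k => if k = j then 1 else 0) (fun _ => 0)) (fun _ => 0)))
        (fun j => Sum.elim (fun _ => 0)
          (Sum.elim (Sum.elim (fun _ => 0) (fun k => if k = j then 1 else 0)) (fun _ => 0))))
      (Sum.elim
        (fun j => Sum.elim (Sum.elim (fun _ => 0) (fun k => if k = j then 1 else 0))
          (Sum.elim (fun _ => 0) (Sum.elim (fun k => if k = j then 1 else 0) (fun _ => 0))))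
        (fun j => Sum.elim (fun _ => 0)
          (Sum.elim (fun _ => 0) (Sum.elim (fun _ => 0) (fun k => if k = j then 1 else 0))))))

noncomputable def UAb : Matrix (UIc (g1 := g1) (b1 := b1) (k1 := k1) (g2 := g2) (b2 := b2) (k2 := k2))
    (UIb (b1 := b1) (b2 := b2)) ℝ :=
  Sum.elim
    (Sum.elim
      (fun r => Sum.elim (Sum.elim (A1b r) (fun _ => 0))
        (fun _ => (-(∑ j, A1c r j) - (∑ j, A1b r j) - bv1 r) / 2))
      (fun r => Sum.elim (Sum.elim (fun _ => 0) (A2b r))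
        (fun _ => (bv2 r + (∑ j, A2c r j) + (∑ j, A2b r j)) / 2)))
    (Sum.elim
      (Sum.elim (fun _ => Sum.elim (fun _ => 0) (fun _ => -1))
                (fun j => Sum.elim (Sum.elim (fun k => if k = j then 1 else 0) (fun _ => 0))
                  (fun _ => -1)))
      (Sum.elim (fun _ => Sum.elim (fun _ => 0) (fun _ => 1))
                (fun j => Sum.elim (Sum.elim (fun _ => 0) (fun k => if k = j then 1 else 0))
                  (fun _ => 1))))

noncomputable def Ub : UIc (g1 := g1) (b1 := b1) (k1 := k1) (g2 := g2) (b2 := b2) (k2 := k2) → ℝ :=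
  Sum.elim
    (Sum.elim (fun r => (bv1 r - (∑ j, A1c r j) - (∑ j, A1b r j)) / 2)
              (fun r => (bv2 r - (∑ j, A2c r j) - (∑ j, A2b r j)) / 2))
    (fun _ => -1)

lemma union_form :
    IsHybridZonotope
      (({z | ∃ (ξc : Fin g1 → ℝ) (ξb : Fin b1 → ℝ),
          (∀ i, |ξc i| ≤ 1) ∧ (∀ i, ξb i = -1 ∨ ξb i = 1) ∧
          A1c.mulVec ξc + A1b.mulVec ξb = bv1 ∧
          z = G1c.mulVec ξc + G1b.mulVec ξb + c1} : Set (Fin n → ℝ)) ∪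
       {z | ∃ (ξc : Fin g2 → ℝ) (ξb : Fin b2 → ℝ),
          (∀ i, |ξc i| ≤ 1) ∧ (∀ i, ξb i = -1 ∨ ξb i = 1) ∧
          A2c.mulVec ξc + A2b.mulVec ξb = bv2 ∧
          z = G2c.mulVec ξc + G2b.mulVec ξb + c2}) := by
  have key : (({z | ∃ (ξc : Fin g1 → ℝ) (ξb : Fin b1 → ℝ),
          (∀ i, |ξc i| ≤ 1) ∧ (∀ i, ξb i = -1 ∨ ξb i = 1) ∧
          A1c.mulVec ξc + A1b.mulVec ξb = bv1 ∧
          z = G1c.mulVec ξc + G1b.mulVec ξb + c1} : Set (Fin n → ℝ)) ∪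
       {z | ∃ (ξc : Fin g2 → ℝ) (ξb : Fin b2 → ℝ),
          (∀ i, |ξc i| ≤ 1) ∧ (∀ i, ξb i = -1 ∨ ξb i = 1) ∧
          A2c.mulVec ξc + A2b.mulVec ξb = bv2 ∧
          z = G2c.mulVec ξc + G2b.mulVec ξb + c2}) =
      {z | ∃ (ξc : UIg (g1 := g1) (g2 := g2) (b1 := b1) (b2 := b2) → ℝ)
            (ξb : UIb (b1 := b1) (b2 := b2) → ℝ),
          (∀ i, |ξc i| ≤ 1) ∧ (∀ i, ξb i = -1 ∨ ξb i = 1) ∧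
          (UAc A1c A2c).mulVec ξc + (UAb A1c A1b bv1 A2c A2b bv2).mulVec ξb
            = Ub A1c A1b bv1 A2c A2b bv2 ∧
          z = (UGc G1c G2c).mulVec ξc + (UGb c1 G1c G1b c2 G2c G2b).mulVec ξb
            + Uc c1 G1c G1b c2 G2c G2b} := by
    ext z
    simp only [Set.mem_union, Set.mem_setOf_eq]
    constructor
    · rintro (⟨p, q, hp, hq, hcon, hz⟩ | ⟨p, q, hp, hq, hcon, hz⟩)
      · -- z ∈ Z₁ : take σ = 1, force the second block to -1
        refine ⟨Sum.elim (Sum.elim p (fun _ => -1))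
            (Sum.elim (Sum.elim (fun j => -p j) (fun j => -q j)) (fun _ => -1)),
          Sum.elim (Sum.elim q (fun _ => -1)) (fun _ => 1), ?_, ?_, ?_, ?_⟩
        · rintro ((j | j) | ((j | j) | (j | j))) <;>
            simp only [Sum.elim_inl, Sum.elim_inr, abs_neg]
          · exact hp j
          · norm_num
          · exact hp j
          · rcases hq j with h | h <;> simp [h]
          · norm_num
          · norm_num
        · rintro ((j | j) | ⟨⟩)
          · exact hq j
          · norm_num
          · norm_num
        · funext r
          have hc := congrFun hcon
          rcases r with ((r | r) | ((j | j) | (j | j))) <;>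
            simp only [Matrix.mulVec, dotProduct, Pi.add_apply, UAc, UAb, Ub,
              Fintype.sum_sum_type, Sum.elim_inl, Sum.elim_inr, Finset.univ_unique,
              Finset.sum_singleton, ite_mul, one_mul, zero_mul, mul_zero, mul_one,
              mul_neg_one, Finset.sum_ite_eq', Finset.mem_univ, if_true,
              Finset.sum_const_zero, neg_zero, zero_add, add_zero, neg_neg]
          · have h := hc r
            simp only [Matrix.mulVec, dotProduct, Pi.add_apply] at h
            ring_nf
            ring_nf at h
            linarith
          · (try simp only [Finset.sum_neg_distrib, Finset.sum_ite_eq', Finset.mem_univ,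
              ite_true]); ring1
          · (try simp only [Finset.sum_neg_distrib, Finset.sum_ite_eq', Finset.mem_univ,
              ite_true]); ring1
          · (try simp only [Finset.sum_neg_distrib, Finset.sum_ite_eq', Finset.mem_univ,
              ite_true]); ring1
          · (try simp only [Finset.sum_neg_distrib, Finset.sum_ite_eq', Finset.mem_univ,
              ite_true]); ring1
          · (try simp only [Finset.sum_neg_distrib, Finset.sum_ite_eq', Finset.mem_univ,
              ite_true]); ring1
        · funext i
          have h := congrFun hz i
          simp only [Matrix.mulVec, dotProduct, Pi.add_apply] at h
          simp only [Matrix.mulVec, dotProduct, Pi.add_apply, UGc, UGb, Uc,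
            Fintype.sum_sum_type, Sum.elim_inl, Sum.elim_inr, Finset.univ_unique,
            Finset.sum_singleton]
          simp only [mul_neg_one, mul_zero, mul_one, zero_mul, neg_zero, neg_neg,
            Finset.sum_neg_distrib, Finset.sum_const_zero, zero_add, add_zero]
          linarith
      · -- z ∈ Z₂ : take σ = -1, force the first block to -1
        refine ⟨Sum.elim (Sum.elim (fun _ => -1) p)
            (Sum.elim (Sum.elim (fun _ => -1) (fun _ => -1)) (Sum.elim (fun j => -p j) (fun j => -q j))),
          Sum.elim (Sum.elim (fun _ => -1) q) (fun _ => -1), ?_, ?_, ?_, ?_⟩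
        · rintro ((j | j) | ((j | j) | (j | j))) <;>
            simp only [Sum.elim_inl, Sum.elim_inr, abs_neg]
          · norm_num
          · exact hp j
          · norm_num
          · norm_num
          · exact hp j
          · rcases hq j with h | h <;> simp [h]
        · rintro ((j | j) | ⟨⟩)
          · norm_num
          · exact hq j
          · norm_num
        · funext r
          have hc := congrFun hcon
          rcases r with ((r | r) | ((j | j) | (j | j))) <;>
            simp only [Matrix.mulVec, dotProduct, Pi.add_apply, UAc, UAb, Ub,
              Fintype.sum_sum_type, Sum.elim_inl, Sum.elim_inr, Finset.univ_unique,
              Finset.sum_singleton, ite_mul, one_mul, zero_mul, mul_zero, mul_one,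
              mul_neg_one, Finset.sum_ite_eq', Finset.mem_univ, if_true,
              Finset.sum_const_zero, neg_zero, zero_add, add_zero, neg_neg]
          · (try simp only [Finset.sum_neg_distrib, Finset.sum_ite_eq', Finset.mem_univ,
              ite_true]); ring1
          · have h := hc r
            simp only [Matrix.mulVec, dotProduct, Pi.add_apply] at h
            ring_nf
            ring_nf at h
            linarith
          · (try simp only [Finset.sum_neg_distrib, Finset.sum_ite_eq', Finset.mem_univ,
              ite_true]); ring1
          · (try simp only [Finset.sum_neg_distrib, Finset.sum_ite_eq', Finset.mem_univ,
              ite_true]); ring1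
          · (try simp only [Finset.sum_neg_distrib, Finset.sum_ite_eq', Finset.mem_univ,
              ite_true]); ring1
          · (try simp only [Finset.sum_neg_distrib, Finset.sum_ite_eq', Finset.mem_univ,
              ite_true]); ring1
        · funext i
          have h := congrFun hz i
          simp only [Matrix.mulVec, dotProduct, Pi.add_apply] at h
          simp only [Matrix.mulVec, dotProduct, Pi.add_apply, UGc, UGb, Uc,
            Fintype.sum_sum_type, Sum.elim_inl, Sum.elim_inr, Finset.univ_unique,
            Finset.sum_singleton]
          simp only [mul_neg_one, mul_zero, mul_one, zero_mul, neg_zero, neg_neg,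
            Finset.sum_neg_distrib, Finset.sum_const_zero, zero_add, add_zero]
          linarith
    · rintro ⟨ξc, ξb, hb, hbin, hcon, hz⟩
      have hC := fun r => congrFun hcon r
      rcases hbin (Sum.inr ()) with hσ | hσ
      · -- σ = -1 : point lies in Z₂
        right
        have hc1 : ∀ j, ξc (Sum.inl (Sum.inl j)) = -1 := by
          intro j
          have h := hC (Sum.inr (Sum.inl (Sum.inl j)))
          simp only [Matrix.mulVec, dotProduct, Pi.add_apply, UAc, UAb, Ub,
            Fintype.sum_sum_type, Sum.elim_inl, Sum.elim_inr, Finset.univ_unique,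
            Finset.sum_singleton] at h
          simp only [ite_mul, one_mul, zero_mul, Finset.sum_ite_eq',
            Finset.mem_univ, if_true, mul_zero, mul_one, mul_neg_one,
            Finset.sum_const_zero, zero_mul, zero_add, add_zero, hσ] at h
          have h1 := abs_le.mp (hb (Sum.inl (Sum.inl j)))
          have h2 := abs_le.mp (hb (Sum.inr (Sum.inl (Sum.inl j))))
          linarith [h1.1, h1.2, h2.1, h2.2]
        have hb1 : ∀ j, ξb (Sum.inl (Sum.inl j)) = -1 := by
          intro j
          have h := hC (Sum.inr (Sum.inl (Sum.inr j)))
          simp only [Matrix.mulVec, dotProduct, Pi.add_apply, UAc, UAb, Ub,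
            Fintype.sum_sum_type, Sum.elim_inl, Sum.elim_inr, Finset.univ_unique,
            Finset.sum_singleton] at h
          simp only [ite_mul, one_mul, zero_mul, Finset.sum_ite_eq',
            Finset.mem_univ, if_true, mul_zero, mul_one, mul_neg_one,
            Finset.sum_const_zero, zero_mul, zero_add, add_zero, hσ] at h
          have h2 := abs_le.mp (hb (Sum.inr (Sum.inl (Sum.inr j))))
          rcases hbin (Sum.inl (Sum.inl j)) with hh | hh
          · exact hh
          · exfalso; rw [hh] at h; linarith [h2.1, h2.2]
        refine ⟨fun j => ξc (Sum.inl (Sum.inr j)), fun j => ξb (Sum.inl (Sum.inr j)),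
          fun j => hb _, fun j => hbin _, ?_, ?_⟩
        · funext r
          have h := hC (Sum.inl (Sum.inr r))
          simp only [Matrix.mulVec, dotProduct, Pi.add_apply, UAc, UAb, Ub,
            Fintype.sum_sum_type, Sum.elim_inl, Sum.elim_inr, Finset.univ_unique,
            Finset.sum_singleton, zero_mul, Finset.sum_const_zero, zero_add, add_zero,
            hσ, mul_neg_one] at h
          simp only [Matrix.mulVec, dotProduct, Pi.add_apply]
          linarith
        · funext i
          have h := congrFun hz i
          simp only [Matrix.mulVec, dotProduct, Pi.add_apply, UGc, UGb, Uc,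
            Fintype.sum_sum_type, Sum.elim_inl, Sum.elim_inr, Finset.univ_unique,
            Finset.sum_singleton, hσ, hc1, hb1] at h
          simp only [mul_neg_one, mul_zero, mul_one, zero_mul, neg_zero, neg_neg,
            Finset.sum_neg_distrib, Finset.sum_const_zero, zero_add, add_zero] at h
          simp only [Matrix.mulVec, dotProduct, Pi.add_apply]
          linarith
      · -- σ = 1 : point lies in Z₁
        left
        have hc2 : ∀ j, ξc (Sum.inl (Sum.inr j)) = -1 := by
          intro j
          have h := hC (Sum.inr (Sum.inr (Sum.inl j)))
          simp only [Matrix.mulVec, dotProduct, Pi.add_apply, UAc, UAb, Ub,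
            Fintype.sum_sum_type, Sum.elim_inl, Sum.elim_inr, Finset.univ_unique,
            Finset.sum_singleton] at h
          simp only [ite_mul, one_mul, zero_mul, Finset.sum_ite_eq',
            Finset.mem_univ, if_true, mul_zero, mul_one, mul_neg_one,
            Finset.sum_const_zero, zero_mul, zero_add, add_zero, hσ] at h
          have h1 := abs_le.mp (hb (Sum.inl (Sum.inr j)))
          have h2 := abs_le.mp (hb (Sum.inr (Sum.inr (Sum.inl j))))
          linarith [h1.1, h1.2, h2.1, h2.2]
        have hb2 : ∀ j, ξb (Sum.inl (Sum.inr j)) = -1 := by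
          intro j
          have h := hC (Sum.inr (Sum.inr (Sum.inr j)))
          simp only [Matrix.mulVec, dotProduct, Pi.add_apply, UAc, UAb, Ub,
            Fintype.sum_sum_type, Sum.elim_inl, Sum.elim_inr, Finset.univ_unique,
            Finset.sum_singleton] at h
          simp only [ite_mul, one_mul, zero_mul, Finset.sum_ite_eq',
            Finset.mem_univ, if_true, mul_zero, mul_one, mul_neg_one,
            Finset.sum_const_zero, zero_mul, zero_add, add_zero, hσ] at h
          have h2 := abs_le.mp (hb (Sum.inr (Sum.inr (Sum.inr j))))
          rcases hbin (Sum.inl (Sum.inr j)) with hh | hh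
          · exact hh
          · exfalso; rw [hh] at h; linarith [h2.1, h2.2]
        refine ⟨fun j => ξc (Sum.inl (Sum.inl j)), fun j => ξb (Sum.inl (Sum.inl j)),
          fun j => hb _, fun j => hbin _, ?_, ?_⟩
        · funext r
          have h := hC (Sum.inl (Sum.inl r))
          simp only [Matrix.mulVec, dotProduct, Pi.add_apply, UAc, UAb, Ub,
            Fintype.sum_sum_type, Sum.elim_inl, Sum.elim_inr, Finset.univ_unique,
            Finset.sum_singleton, zero_mul, Finset.sum_const_zero, zero_add, add_zero,
            hσ, mul_one] at h
          simp only [Matrix.mulVec, dotProduct, Pi.add_apply]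
          linarith
        · funext i
          have h := congrFun hz i
          simp only [Matrix.mulVec, dotProduct, Pi.add_apply, UGc, UGb, Uc,
            Fintype.sum_sum_type, Sum.elim_inl, Sum.elim_inr, Finset.univ_unique,
            Finset.sum_singleton, hσ, hc2, hb2] at h
          simp only [mul_neg_one, mul_zero, mul_one, zero_mul, neg_zero, neg_neg,
            Finset.sum_neg_distrib, Finset.sum_const_zero, zero_add, add_zero] at h
          simp only [Matrix.mulVec, dotProduct, Pi.add_apply]
          linarith
  rw [key]
  exact aux_reindex _ _ _ _ _ _

end UnionConstruction

/-- Hybrid zonotopes are closed under unions: if `Z₁, Z₂ ⊆ ℝⁿ` are hybrid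
zonotopes, then `Z₁ ∪ Z₂` is a hybrid zonotope. -/
theorem isHybridZonotope_union {n : ℕ} (Z₁ Z₂ : Set (Fin n → ℝ))
    (hZ₁ : IsHybridZonotope Z₁) (hZ₂ : IsHybridZonotope Z₂) :
    IsHybridZonotope (Z₁ ∪ Z₂) := by
  obtain ⟨g1, b1, k1, c1, G1c, G1b, A1c, A1b, bv1, rfl⟩ := hZ₁
  obtain ⟨g2, b2, k2, c2, G2c, G2b, A2c, A2b, bv2, rfl⟩ := hZ₂
  exact union_form c1 G1c G1b A1c A1b bv1 c2 G2c G2b A2c A2b bv2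
end

section
/- Let Z ⊆ ℝ^n be a nonempty hybrid zonotope. Then the image of Z under the maxout function, namely { max_{i∈[n]} z_i : z ∈ Z } ⊆ ℝ, is a hybrid zonotope. -/
lemma unionIcc_hz (m : ℕ) (hm : 0 < m) (a b : Fin m → ℝ) (hab : ∀ k, a k ≤ b k) :
    IsHybridZonotope {y : Fin 1 → ℝ | ∃ k, y 0 ∈ Set.Icc (a k) (b k)} := by
  classical
  refine ⟨m + m, m, m + 1, (fun _ => (∑ k, b k) / 2),
    Matrix.of (fun _ j => Fin.addCases (fun k => (b k - a k) / 2) (fun _ => 0) j),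
    Matrix.of (fun _ k => a k / 2),
    Matrix.of (Fin.lastCases (fun _ => 0)
      (fun r0 j => Fin.addCases (fun k => if r0 = k then (1:ℝ) else 0)
        (fun k => if r0 = k then (1:ℝ) else 0) j)),
    Matrix.of (Fin.lastCases (fun _ => (1:ℝ)) (fun r0 k => if r0 = k then (-1:ℝ) else 0)),
    Fin.lastCases (2 - (m:ℝ)) (fun _ => -1), ?_⟩
  have hAcRow : ∀ (ξ : Fin (m+m) → ℝ) (r : Fin m),
      (Matrix.of (Fin.lastCases (fun _ => (0:ℝ))
        (fun r0 j => Fin.addCases (fun k => if r0 = k then (1:ℝ) else 0)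
          (fun k => if r0 = k then (1:ℝ) else 0) j)) :
        Matrix (Fin (m+1)) (Fin (m+m)) ℝ).mulVec ξ (Fin.castSucc r)
        = ξ (Fin.castAdd m r) + ξ (Fin.natAdd m r) := by
    intro ξ r
    simp only [Matrix.mulVec, dotProduct, Matrix.of_apply, Fin.lastCases_castSucc,
      Fin.sum_univ_add, Fin.addCases_left, Fin.addCases_right, ite_mul, one_mul, zero_mul,
      Finset.sum_ite_eq, Finset.mem_univ, if_true]
  have hAcLast : ∀ (ξ : Fin (m+m) → ℝ),
      (Matrix.of (Fin.lastCases (fun _ => (0:ℝ))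
        (fun r0 j => Fin.addCases (fun k => if r0 = k then (1:ℝ) else 0)
          (fun k => if r0 = k then (1:ℝ) else 0) j)) :
        Matrix (Fin (m+1)) (Fin (m+m)) ℝ).mulVec ξ (Fin.last m) = 0 := by
    intro ξ
    simp [Matrix.mulVec, dotProduct]
  have hAbRow : ∀ (ξ : Fin m → ℝ) (r : Fin m),
      (Matrix.of (Fin.lastCases (fun _ => (1:ℝ)) (fun r0 k => if r0 = k then (-1:ℝ) else 0)) :
        Matrix (Fin (m+1)) (Fin m) ℝ).mulVec ξ (Fin.castSucc r) = -ξ r := by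
    intro ξ r
    simp only [Matrix.mulVec, dotProduct, Matrix.of_apply, Fin.lastCases_castSucc,
      ite_mul, neg_mul, one_mul, zero_mul, Finset.sum_ite_eq, Finset.mem_univ, if_true,
      Finset.sum_neg_distrib]
  have hAbLast : ∀ (ξ : Fin m → ℝ),
      (Matrix.of (Fin.lastCases (fun _ => (1:ℝ)) (fun r0 k => if r0 = k then (-1:ℝ) else 0)) :
        Matrix (Fin (m+1)) (Fin m) ℝ).mulVec ξ (Fin.last m) = ∑ k, ξ k := by
    intro ξ
    simp [Matrix.mulVec, dotProduct]
  have hG : ∀ (ξ : Fin (m+m) → ℝ) (β : Fin m → ℝ),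
      ((Matrix.of (fun _ j => Fin.addCases (fun k => (b k - a k) / 2) (fun _ => 0) j) :
        Matrix (Fin 1) (Fin (m+m)) ℝ).mulVec ξ
        + (Matrix.of (fun _ k => a k / 2) : Matrix (Fin 1) (Fin m) ℝ).mulVec β
        + (fun _ => (∑ k, b k) / 2) : Fin 1 → ℝ) 0
        = ∑ k, ((b k - a k) / 2 * ξ (Fin.castAdd m k) + a k / 2 * β k + b k / 2) := by
    intro ξ β
    simp only [Pi.add_apply, Matrix.mulVec, dotProduct, Matrix.of_apply,
      Fin.sum_univ_add, Fin.addCases_left, Fin.addCases_right, zero_mul,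
      Finset.sum_const_zero, add_zero, Finset.sum_add_distrib, Finset.sum_div]
  ext y
  simp only [Set.mem_setOf_eq]
  constructor
  · rintro ⟨k0, hax, hxb⟩
    set x := y 0 with hx
    set v0 : ℝ := if h : b k0 = a k0 then 0 else (2 * x - a k0 - b k0) / (b k0 - a k0) with hv0
    have hv0m : -1 ≤ v0 ∧ v0 ≤ 1 := by
      rw [hv0]; split_ifs with h
      · norm_num
      · have hba : 0 < b k0 - a k0 := by
          rcases lt_or_eq_of_le (hab k0) with h' | h'
          · linarith
          · exact absurd h'.symm h
        constructor
        · rw [le_div_iff₀ hba]; linarith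
        · rw [div_le_one hba]; linarith
    have hval : (b k0 - a k0) / 2 * v0 + a k0 / 2 * 1 + b k0 / 2 = x := by
      rw [hv0]; split_ifs with h
      · rw [h]; linarith
      · have hba : b k0 - a k0 ≠ 0 := fun hc => h (by linarith)
        field_simp
        ring
    refine ⟨(fun j => Fin.addCases (fun k => if k = k0 then v0 else -1)
        (fun k => if k = k0 then -v0 else -1) j),
      (fun k => if k = k0 then 1 else -1), ?_, ?_, ?_, ?_⟩
    · intro i
      induction i using Fin.addCases with
      | left k =>
        simp only [Fin.addCases_left]
        split_ifs
        · rw [abs_le]; exact hv0m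
        · norm_num
      | right k =>
        simp only [Fin.addCases_right]
        split_ifs
        · rw [abs_le]; constructor <;> linarith [hv0m.1, hv0m.2]
        · norm_num
    · intro i
      dsimp only
      split_ifs
      · right; rfl
      · left; rfl
    · funext r
      rw [Pi.add_apply]
      induction r using Fin.lastCases with
      | last =>
        rw [hAcLast, hAbLast]
        have hcongr : ∀ k : Fin m, (if k = k0 then (1:ℝ) else -1)
            = (if k = k0 then (2:ℝ) else 0) + (-1) := by
          intro k; split_ifs <;> ring
        rw [Finset.sum_congr rfl (fun k _ => hcongr k), Finset.sum_add_distrib,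
          Finset.sum_ite_eq', Finset.sum_const]
        simp [Fin.lastCases_last]
        push_cast
        ring
      | cast r =>
        rw [hAcRow, hAbRow, Fin.addCases_left, Fin.addCases_right]
        simp only [Fin.lastCases_castSucc]
        by_cases hr : r = k0 <;> simp [hr] <;> ring
    · funext i
      have hi : i = 0 := Subsingleton.elim i 0
      subst hi
      rw [hG]
      have hcongr : ∀ k : Fin m,
          ((b k - a k) / 2 * (Fin.addCases (fun k => if k = k0 then v0 else -1)
            (fun k => if k = k0 then -v0 else -1) (Fin.castAdd m k) : ℝ)
            + a k / 2 * (if k = k0 then (1:ℝ) else -1) + b k / 2)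
          = if k = k0 then x else 0 := by
        intro k
        rw [Fin.addCases_left]
        by_cases hk : k = k0
        · subst hk
          simp only [if_pos rfl]
          exact hval
        · simp only [if_neg hk]
          ring
      rw [Finset.sum_congr rfl (fun k _ => hcongr k), Finset.sum_ite_eq']
      simp
      exact hx.symm
  · rintro ⟨ξc, ξb, hξc, hξb, hcon, hz⟩
    have hlast := congrFun hcon (Fin.last m)
    rw [Pi.add_apply, hAcLast, hAbLast] at hlast
    simp only [Fin.lastCases_last, zero_add] at hlast
    set T : Finset (Fin m) := Finset.univ.filter (fun k => ξb k = 1) with hT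
    have hsumT : ∑ k ∈ T, ξb k = (T.card : ℝ) := by
      rw [Finset.sum_congr rfl (fun k hk => (Finset.mem_filter.mp hk).2), Finset.sum_const]
      simp
      rfl
    have hsumN : ∑ k ∈ Finset.univ.filter (fun k => ¬ ξb k = 1), ξb k
        = -((Finset.univ.filter (fun k => ¬ ξb k = 1)).card : ℝ) := by
      rw [Finset.sum_congr rfl (fun k hk => (hξb k).resolve_right (Finset.mem_filter.mp hk).2),
        Finset.sum_const]
      simp
    have hcards : T.card + (Finset.univ.filter (fun k => ¬ ξb k = 1)).card = m := by
      rw [hT, Finset.card_filter_add_card_filter_not]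
      simp
    have hTcard : T.card = 1 := by
      have hsplit := Finset.sum_filter_add_sum_filter_not Finset.univ (fun k => ξb k = 1) ξb
      rw [← hT] at hsplit
      rw [hsumT, hsumN, hlast] at hsplit
      have hc : ((T.card : ℝ)) + ((Finset.univ.filter (fun k => ¬ ξb k = 1)).card : ℝ)
          = (m : ℝ) := by exact_mod_cast congrArg (Nat.cast : ℕ → ℝ) hcards
      have : (T.card : ℝ) = 1 := by linarith
      exact_mod_cast this
    obtain ⟨k0, hk0⟩ := Finset.card_eq_one.mp hTcard
    have hβk0 : ξb k0 = 1 := by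
      have hmem : k0 ∈ T := by rw [hk0]; exact Finset.mem_singleton_self k0
      exact (Finset.mem_filter.mp hmem).2
    have hβ : ∀ k, k ≠ k0 → ξb k = -1 := by
      intro k hk
      refine (hξb k).resolve_right (fun h1 => hk ?_)
      have hmem : k ∈ T := Finset.mem_filter.mpr ⟨Finset.mem_univ _, h1⟩
      rw [hk0] at hmem
      exact Finset.mem_singleton.mp hmem
    have hrow : ∀ r : Fin m,
        ξc (Fin.castAdd m r) + ξc (Fin.natAdd m r) + -ξb r = -1 := by
      intro r
      have h := congrFun hcon (Fin.castSucc r)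
      rw [Pi.add_apply, hAcRow, hAbRow] at h
      simpa only [Fin.lastCases_castSucc] using h
    have hv : ∀ r, r ≠ k0 → ξc (Fin.castAdd m r) = -1 := by
      intro r hr
      have h := hrow r
      rw [hβ r hr] at h
      have h1 := (abs_le.mp (hξc (Fin.castAdd m r))).1
      have h2 := (abs_le.mp (hξc (Fin.natAdd m r))).1
      linarith
    have hy0 : y 0 = ∑ k, ((b k - a k) / 2 * ξc (Fin.castAdd m k)
        + a k / 2 * ξb k + b k / 2) := by
      rw [congrFun hz 0]
      exact hG ξc ξb
    rw [Finset.sum_eq_single k0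
      (fun k _ hk => by rw [hv k hk, hβ k hk]; ring)
      (fun h => absurd (Finset.mem_univ k0) h)] at hy0
    rw [hβk0] at hy0
    have hvm := abs_le.mp (hξc (Fin.castAdd m k0))
    refine ⟨k0, ?_, ?_⟩
    · rw [hy0]; nlinarith [hab k0, hvm.1]
    · rw [hy0]; nlinarith [hab k0, hvm.2]
/-- If `Z ⊆ ℝⁿ` is a nonempty hybrid zonotope, then the image of `Z` under the
maxout function `z ↦ max_{i ∈ [n]} z_i`, viewed as a subset of `ℝ = ℝ¹`, is a hybrid
zonotope. -/
theorem isHybridZonotope_maxout {n : ℕ} (hn : 0 < n) (Z : Set (Fin n → ℝ))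
    (hZne : Z.Nonempty) (hZ : IsHybridZonotope Z) :
    IsHybridZonotope {y : Fin 1 → ℝ | ∃ z ∈ Z,
      y = fun _ => Finset.univ.sup' ⟨⟨0, hn⟩, Finset.mem_univ _⟩ z} := by
  classical
  obtain ⟨ng, nb, nc, c, Gc, Gb, Ac, Ab, bv, hZeq⟩ := hZ
  set hne : (Finset.univ : Finset (Fin n)).Nonempty := ⟨⟨0, hn⟩, Finset.mem_univ _⟩ with hhne
  set f : (Fin n → ℝ) → ℝ := fun z => Finset.univ.sup' hne z with hf
  have hfcont : Continuous f :=
    Continuous.finset_sup'_apply hne (fun i _ => continuous_apply i)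
  have hmulcont : ∀ {p q : ℕ} (M : Matrix (Fin p) (Fin q) ℝ),
      Continuous (fun ξ : Fin q → ℝ => M.mulVec ξ) := by
    intro p q M
    exact (Matrix.mulVecLin M).continuous_of_finiteDimensional
  set ε : (Fin nb → Bool) → (Fin nb → ℝ) := fun σ i => if σ i then 1 else -1 with hε
  have hεbin : ∀ σ i, ε σ i = -1 ∨ ε σ i = 1 := by
    intro σ i; by_cases h : σ i <;> simp [hε, h]
  set D : (Fin nb → Bool) → Set (Fin ng → ℝ) :=
    fun σ => {ξ | (∀ i, |ξ i| ≤ 1) ∧ Ac.mulVec ξ + Ab.mulVec (ε σ) = bv} with hD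
  set g : (Fin nb → Bool) → (Fin ng → ℝ) → ℝ :=
    fun σ ξ => f (Gc.mulVec ξ + Gb.mulVec (ε σ) + c) with hg
  set I : (Fin nb → Bool) → Set ℝ := fun σ => g σ '' D σ with hI
  have hgcont : ∀ σ, Continuous (g σ) :=
    fun σ => hfcont.comp (((hmulcont Gc).add continuous_const).add continuous_const)
  have hDeq : ∀ σ, D σ = (Set.pi Set.univ fun _ : Fin ng => Set.Icc (-1:ℝ) 1)
      ∩ ((fun ξ => Ac.mulVec ξ) ⁻¹' {bv - Ab.mulVec (ε σ)}) := by
    intro σ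
    ext ξ
    simp only [hD, Set.mem_setOf_eq, Set.mem_inter_iff, Set.mem_pi, Set.mem_univ,
      Set.mem_preimage, Set.mem_singleton_iff, Set.mem_Icc, forall_true_left, abs_le,
      eq_sub_iff_add_eq]
  have hDcompact : ∀ σ, IsCompact (D σ) := by
    intro σ
    rw [hDeq σ]
    exact (isCompact_univ_pi fun _ => isCompact_Icc).inter_right
      (isClosed_singleton.preimage (hmulcont Ac))
  have hDconvex : ∀ σ, Convex ℝ (D σ) := by
    intro σ
    rw [hDeq σ]
    refine (convex_pi fun i _ => convex_Icc _ _).inter ?_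
    exact (convex_singleton (bv - Ab.mulVec (ε σ))).linear_preimage (Matrix.mulVecLin Ac)
  have hIcompact : ∀ σ, IsCompact (I σ) := fun σ => (hDcompact σ).image (hgcont σ)
  have hIicc : ∀ σ, (I σ).Nonempty → I σ = Set.Icc (sInf (I σ)) (sSup (I σ)) := by
    intro σ hne'
    exact eq_Icc_of_connected_compact
      ⟨hne', ((hDconvex σ).isPreconnected).image _ ((hgcont σ).continuousOn)⟩
      (hIcompact σ)
  have hZmem : ∀ z ∈ Z, ∃ σ, ∃ ξ ∈ D σ, z = Gc.mulVec ξ + Gb.mulVec (ε σ) + c := by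
    intro z hz
    rw [hZeq] at hz
    obtain ⟨ξc, ξb, h1, h2, h3, h4⟩ := hz
    refine ⟨fun i => if ξb i = 1 then true else false, ξc, ?_, ?_⟩
    · have hεσ : ε (fun i => if ξb i = 1 then true else false) = ξb := by
        funext i
        rcases h2 i with h | h <;> simp [hε, h]
        norm_num
      rw [hD]
      exact ⟨h1, by rw [hεσ]; exact h3⟩
    · have hεσ : ε (fun i => if ξb i = 1 then true else false) = ξb := by
        funext i
        rcases h2 i with h | h <;> simp [hε, h]
        norm_num
      rw [hεσ]; exact h4
  have hZmem' : ∀ σ, ∀ ξ ∈ D σ, (Gc.mulVec ξ + Gb.mulVec (ε σ) + c) ∈ Z := by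
    intro σ ξ hξ
    rw [hZeq]
    exact ⟨ξ, ε σ, hξ.1, hεbin σ, hξ.2, rfl⟩
  set S : Finset (Fin nb → Bool) := Finset.univ.filter (fun σ => (I σ).Nonempty) with hS
  have hSne : S.Nonempty := by
    obtain ⟨z, hz⟩ := hZne
    obtain ⟨σ, ξ, hξ, hzeq⟩ := hZmem z hz
    exact ⟨σ, Finset.mem_filter.mpr ⟨Finset.mem_univ _, ⟨g σ ξ, ⟨ξ, hξ, rfl⟩⟩⟩⟩
  have hm : 0 < S.card := Finset.card_pos.mpr hSne
  set e : Fin S.card ≃ {x // x ∈ S} := S.equivFin.symm with he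
  set a' : Fin S.card → ℝ := fun k => sInf (I (e k)) with ha'
  set b' : Fin S.card → ℝ := fun k => sSup (I (e k)) with hb'
  have hIne : ∀ k, (I (e k)).Nonempty :=
    fun k => (Finset.mem_filter.mp (e k).2).2
  have hIk : ∀ k, I (e k) = Set.Icc (a' k) (b' k) := fun k => hIicc _ (hIne k)
  have hab' : ∀ k, a' k ≤ b' k := by
    intro k
    obtain ⟨x, hx⟩ := hIne k
    exact le_trans (csInf_le (hIcompact _).bddBelow hx) (le_csSup (hIcompact _).bddAbove hx)
  have hset : {y : Fin 1 → ℝ | ∃ z ∈ Z, y = fun _ => Finset.univ.sup' hne z}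
      = {y : Fin 1 → ℝ | ∃ k : Fin S.card, y 0 ∈ Set.Icc (a' k) (b' k)} := by
    ext y
    simp only [Set.mem_setOf_eq]
    constructor
    · rintro ⟨z, hz, hy⟩
      obtain ⟨σ, ξ, hξ, hzeq⟩ := hZmem z hz
      have hfz : f z ∈ I σ := ⟨ξ, hξ, by rw [hzeq]⟩
      have hσS : σ ∈ S := Finset.mem_filter.mpr ⟨Finset.mem_univ _, ⟨f z, hfz⟩⟩
      refine ⟨S.equivFin ⟨σ, hσS⟩, ?_⟩
      have heq : e (S.equivFin ⟨σ, hσS⟩) = ⟨σ, hσS⟩ := S.equivFin.symm_apply_apply _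
      have hy0 : y 0 = f z := by rw [hy]
      rw [← hIk _, heq, hy0]
      exact hfz
    · rintro ⟨k, hk⟩
      have hmem : y 0 ∈ I (e k) := by rw [hIk k]; exact hk
      obtain ⟨ξ, hξ, hgval⟩ := hmem
      refine ⟨Gc.mulVec ξ + Gb.mulVec (ε (e k)) + c, hZmem' _ ξ hξ, ?_⟩
      funext i
      have hi : i = 0 := Subsingleton.elim i 0
      subst hi
      exact hgval.symm
  rw [hset]
  exact unionIcc_hz S.card hm a' b' hab'
end
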